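/- arXiv:math/0403021 — 7 statements merged into one kernel-verified Lean document; each statement's English description precedes it below -/
import Mathlib

section
/- Let k be a field and let A be a quantum graded algebra with a straightening law on a finite poset (Π, ≤st). Then the set of standard monomials on Π (products α₁⋯α_s with αᵢ ∈ Π and α₁ ≤st ⋯ ≤st α_s, together with 1) forms a k-vector space basis of A. -/
open Submodule

theorem exists_bad_pair {α : Type*} (R : α → α → Prop) (l : List α) (hl : ¬ l.Chain' R) :
    ∃ xs a b ys, l = xs ++ a :: b :: ys ∧ ¬ R a b := by
  induction l with
  | nil => exact absurd List.isChain_nil hl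
  | cons x t ih =>
    cases t with
    | nil => exact absurd (List.isChain_singleton x) hl
    | cons y rest =>
      replace hl : ¬ (R x y ∧ List.Chain' R (y :: rest)) := fun h => hl (List.isChain_cons_cons.mpr h)
      by_cases hxy : R x y
      · obtain ⟨xs, a, b, ys, heq, hR⟩ := ih (fun hc => hl ⟨hxy, hc⟩)
        exact ⟨x :: xs, a, b, ys, by rw [heq, List.cons_append], hR⟩
      · exact ⟨[], x, y, rest, rfl, hxy⟩

noncomputable def pidx {ι : Type*} [PartialOrder ι] (i : ι) : ℕ := (Set.Iio i).ncard

theorem pidx_strictMono {ι : Type*} [PartialOrder ι] [Finite ι] {a b : ι} (h : a < b) :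
    pidx a < pidx b :=
  Set.ncard_lt_ncard
    ((Set.ssubset_iff_of_subset (fun x hx => hx.trans h)).mpr ⟨a, h, lt_irrefl a⟩)
    (Set.toFinite _)

theorem pidx_lt_card {ι : Type*} [PartialOrder ι] [Finite ι] (i : ι) :
    pidx i < Nat.card ι := by
  have : (Set.Iio i).ncard < (Set.univ : Set ι).ncard :=
    Set.ncard_lt_ncard
      ((Set.ssubset_iff_of_subset (Set.subset_univ _)).mpr ⟨i, trivial, lt_irrefl i⟩)
      (Set.toFinite _)
  rwa [Set.ncard_univ] at this

def wval {ι : Type*} (f : ι → ℕ) (B : ℕ) (l : List ι) : ℕ :=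
  l.foldl (fun acc a => acc * B + (f a + 1)) 0

theorem wval_shift {ι : Type*} (f : ι → ℕ) (B : ℕ) (l : List ι) (c : ℕ) :
    l.foldl (fun acc a => acc * B + (f a + 1)) c = c * B ^ l.length + wval f B l := by
  induction l generalizing c with
  | nil => simp [wval]
  | cons a t ih =>
    simp only [List.foldl_cons, List.length_cons, wval] at *
    rw [ih, ih (0 * B + (f a + 1))]
    ring

theorem wval_cons {ι : Type*} (f : ι → ℕ) (B : ℕ) (a : ι) (t : List ι) :
    wval f B (a :: t) = (f a + 1) * B ^ t.length + wval f B t := by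
  show List.foldl _ _ (a :: t) = _
  rw [List.foldl_cons, wval_shift]
  ring_nf

theorem wval_append {ι : Type*} (f : ι → ℕ) (B : ℕ) (xs ys : List ι) :
    wval f B (xs ++ ys) = wval f B xs * B ^ ys.length + wval f B ys := by
  show List.foldl _ _ _ = _
  rw [List.foldl_append, wval_shift]
  rfl

theorem wval_lt {ι : Type*} {f : ι → ℕ} {B : ℕ} (hB : ∀ i, f i + 2 ≤ B) (l : List ι) :
    wval f B l < B ^ l.length := by
  induction l with
  | nil => simp [wval]
  | cons a t ih =>
    rw [wval_cons, List.length_cons, pow_succ]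
    have := hB a
    nlinarith [pow_pos (show 0 < B by omega) t.length]

theorem wval_key {ι : Type*} {f : ι → ℕ} {B : ℕ} (hB : ∀ i, f i + 2 ≤ B)
    (xs : List ι) {lam a : ι} (hla : f lam < f a) {zs ys : List ι}
    (hlen : zs.length = ys.length) :
    wval f B (xs ++ lam :: zs) < wval f B (xs ++ a :: ys) := by
  rw [wval_append, wval_append, wval_cons, wval_cons, List.length_cons, List.length_cons, hlen]
  have h1 := wval_lt hB zs
  rw [hlen] at h1
  have h2 : f lam + 1 ≤ f a := hla
  nlinarith [pow_pos (show 0 < B by have := hB a; omega) ys.length]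

theorem wval_key2 {ι : Type*} {f : ι → ℕ} {B : ℕ} (hB : ∀ i, f i + 2 ≤ B)
    (xs : List ι) (lam a b : ι) (ys : List ι) :
    wval f B (xs ++ lam :: ys) < wval f B (xs ++ a :: b :: ys) := by
  rw [wval_append, wval_append]
  have hB1 : 1 ≤ B := by have := hB a; omega
  have h1 : wval f B (lam :: ys) < B ^ (lam :: ys).length := wval_lt hB _
  have h2 : B ^ (lam :: ys).length ≤ wval f B (a :: b :: ys) := by
    rw [wval_cons]
    have : B ^ (lam :: ys).length ≤ (f a + 1) * B ^ (b :: ys).length := by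
      simp only [List.length_cons]
      nlinarith [pow_pos (show 0 < B by omega) (ys.length + 1)]
    omega
  have h3 : wval f B xs * B ^ (lam :: ys).length ≤ wval f B xs * B ^ (a :: b :: ys).length := by
    apply Nat.mul_le_mul_left
    apply Nat.pow_le_pow_right hB1
    simp
  omega

theorem exists_list_map {ι A : Type*} (e : ι → A) (L : List A)
    (h : ∀ z ∈ L, z ∈ Set.range e) : ∃ l : List ι, l.map e = L := by
  induction L with
  | nil => exact ⟨[], rfl⟩
  | cons x t ih =>
    obtain ⟨i, hi⟩ := h x List.mem_cons_self
    obtain ⟨l, hl⟩ := ih (fun z hz => h z (List.mem_cons_of_mem _ hz))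
    exact ⟨i :: l, by simp [hi, hl]⟩


/-- A *quantum graded algebra with a straightening law* over the field `k`, on the finite
poset `ι` (whose elements are realised in `A` via the map `elem`). -/
structure QuantumGradedASL (k : Type*) [Field k] (A : Type*) [Ring A] [Algebra k A]
    (𝒜 : ℕ → Submodule k A) (ι : Type*) [PartialOrder ι] [Finite ι] where
  /-- the map realising the elements of the poset `Π = ι` as elements of `A` -/
  elem : ι → A
  /-- `A` is an `ℕ`-graded `k`-algebra with grading `𝒜` -/
  graded : GradedAlgebra 𝒜
  /-- (1) the elements of `Π` are homogeneous of positive degree -/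
  homog : ∀ i : ι, ∃ d : ℕ, 0 < d ∧ elem i ∈ 𝒜 d
  /-- (2) the elements of `Π` generate `A` as a `k`-algebra -/
  gen : Algebra.adjoin k (Set.range elem) = ⊤
  /-- (3) the standard monomials (products of the `elem i` along nondecreasing lists,
  the empty product being `1`) form a linearly independent family -/
  indep : LinearIndependent k
    (fun l : {l : List ι // l.Chain' (· ≤ ·)} => ((l : List ι).map elem).prod)
  /-- (4) if `a`, `b` are incomparable then `elem a * elem b` is a linear combination of
  terms `elem lam` or `elem lam * elem mu` with `lam ≤ mu`, `lam < a` and `lam < b` -/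
  straighten : ∀ a b : ι, ¬ a ≤ b → ¬ b ≤ a →
    elem a * elem b ∈ Submodule.span k {x : A | ∃ lam : ι, lam < a ∧ lam < b ∧
      (x = elem lam ∨ ∃ mu : ι, lam ≤ mu ∧ x = elem lam * elem mu)}
  /-- (5) for all `a`, `b` there is `0 ≠ c ∈ k` such that `elem a * elem b - c • (elem b * elem a)`
  is a linear combination of terms `elem lam` or `elem lam * elem mu` with `lam ≤ mu`,
  `lam < a` and `lam < b` -/
  comm : ∀ a b : ι, ∃ c : k, c ≠ 0 ∧
    elem a * elem b - c • (elem b * elem a) ∈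
      Submodule.span k {x : A | ∃ lam : ι, lam < a ∧ lam < b ∧
        (x = elem lam ∨ ∃ mu : ι, lam ≤ mu ∧ x = elem lam * elem mu)}

/-- If `A` is a quantum graded algebra with a straightening law on the finite
poset `(Π, ≤st)`, then the standard monomials on `Π` form a `k`-vector space basis of `A`. -/
theorem standard_monomials_basis {k : Type*} [Field k] {A : Type*} [Ring A] [Algebra k A]
    {𝒜 : ℕ → Submodule k A} {ι : Type*} [PartialOrder ι] [Finite ι]
    (Q : QuantumGradedASL k A 𝒜 ι) :
    ∃ B : Module.Basis {l : List ι // l.Chain' (· ≤ ·)} k A,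
      ∀ l : {l : List ι // l.Chain' (· ≤ ·)}, B l = ((l : List ι).map Q.elem).prod := by
  classical
  set f : ι → ℕ := pidx with hf
  set B : ℕ := Nat.card ι + 1 with hBdef
  have hB : ∀ i : ι, f i + 2 ≤ B := fun i => by
    have := pidx_lt_card i; simp only [hf, hBdef]; omega
  set S : Submodule k A := Submodule.span k
    (Set.range fun l : {l : List ι // l.Chain' (· ≤ ·)} => ((l : List ι).map Q.elem).prod)
    with hS
  have main : ∀ N, ∀ l : List ι, wval f B l ≤ N → (l.map Q.elem).prod ∈ S := by
    intro N
    induction N using Nat.strong_induction_on with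
    | _ N ih =>
      intro l hl
      by_cases hc : l.Chain' (· ≤ ·)
      · exact subset_span ⟨⟨l, hc⟩, rfl⟩
      obtain ⟨xs, a, b, ys, rfl, hab⟩ := exists_bad_pair _ l hc
      have hsplit : ((xs ++ a :: b :: ys).map Q.elem).prod
          = (xs.map Q.elem).prod * (Q.elem a * Q.elem b) * (ys.map Q.elem).prod := by
        simp [List.prod_append, mul_assoc]
      set P := (xs.map Q.elem).prod with hP
      set R := (ys.map Q.elem).prod with hR
      have ihw : ∀ l' : List ι, wval f B l' < wval f B (xs ++ a :: b :: ys) →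
          ((l'.map Q.elem).prod ∈ S) := fun l' h =>
        ih (wval f B l') (lt_of_lt_of_le h hl) l' le_rfl
      set T : Set A := {x : A | ∃ lam : ι, lam < a ∧ lam < b ∧
          (x = Q.elem lam ∨ ∃ mu : ι, lam ≤ mu ∧ x = Q.elem lam * Q.elem mu)} with hTdef
      have hT : ∀ x ∈ T, P * x * R ∈ S := by
        rintro x ⟨lam, hla, hlb, (rfl | ⟨mu, hmu, rfl⟩)⟩
        · have h := ihw (xs ++ lam :: ys) (wval_key2 hB xs lam a b ys)
          rwa [show ((xs ++ lam :: ys).map Q.elem).prod = P * Q.elem lam * R from by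
            simp [hP, hR, List.prod_append, mul_assoc]] at h
        · have h := ihw (xs ++ lam :: mu :: ys)
            (wval_key hB xs (pidx_strictMono hla) rfl)
          rwa [show ((xs ++ lam :: mu :: ys).map Q.elem).prod
              = P * (Q.elem lam * Q.elem mu) * R from by
            simp [hP, hR, List.prod_append, mul_assoc]] at h
      have hspan : ∀ x ∈ Submodule.span k T, P * x * R ∈ S := by
        intro x hx
        have hmem : P * x * R ∈ Submodule.map
            ((LinearMap.mulRight k R).comp (LinearMap.mulLeft k P))
            (Submodule.span k T) := ⟨x, hx, rfl⟩
        rw [Submodule.map_span] at hmem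
        refine Submodule.span_le.mpr ?_ hmem
        rintro _ ⟨y, hy, rfl⟩
        exact hT y hy
      rw [hsplit]
      by_cases hba : b ≤ a
      · have hblt : b < a := lt_of_le_of_ne hba (fun h => hab (le_of_eq h.symm))
        obtain ⟨c, hc0, hr⟩ := Q.comm a b
        have hrw : P * (Q.elem a * Q.elem b) * R
            = c • (P * (Q.elem b * Q.elem a) * R)
              + P * (Q.elem a * Q.elem b - c • (Q.elem b * Q.elem a)) * R := by
          rw [mul_sub, sub_mul, mul_smul_comm, smul_mul_assoc]
          abel
        rw [hrw]
        refine S.add_mem (S.smul_mem c ?_) (hspan _ hr)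
        have h := ihw (xs ++ b :: a :: ys) (wval_key hB xs (pidx_strictMono hblt) rfl)
        rwa [show ((xs ++ b :: a :: ys).map Q.elem).prod
            = P * (Q.elem b * Q.elem a) * R from by
          simp [hP, hR, List.prod_append, mul_assoc]] at h
      · exact hspan _ (Q.straighten a b hab hba)
  have htop : ⊤ ≤ S := by
    intro x _
    have hx : x ∈ Subalgebra.toSubmodule (Algebra.adjoin k (Set.range Q.elem)) := by
      rw [Q.gen]; trivial
    rw [Algebra.adjoin_eq_span] at hx
    refine Submodule.span_le.mpr ?_ hx
    intro y hy
    obtain ⟨L, hL, rfl⟩ := Submonoid.exists_list_of_mem_closure hy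
    obtain ⟨l, rfl⟩ := exists_list_map Q.elem L hL
    exact main (wval f B l) l le_rfl
  exact ⟨Module.Basis.mk Q.indep htop, fun l => Module.Basis.mk_apply Q.indep htop l⟩
end

section
/- Let k be a field and let A be a quantum graded algebra with a straightening law on a finite poset (Π, ≤st). Then the Gelfand–Kirillov dimension of A equals rk Π, the rank of the poset Π. -/
/-- The rank of the finite poset `ι`: the maximal number of elements in a chain
`π₁ <st π₂ <st ⋯ <st π_s` of `ι` (`0` if `ι` is empty). -/
noncomputable def posetRank (ι : Type*) [PartialOrder ι] : ℕ :=
  sSup {s : ℕ | ∃ f : Fin s → ι, StrictMono f}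

/-- The Gelfand–Kirillov dimension of `A` computed from the finite-dimensional generating
subspace `V` (containing `1`): `GKdim A = limsup_{s → ∞} log_s (dim_k V^s)`. -/
noncomputable def gkDim (k : Type*) [Field k] {A : Type*} [Ring A] [Algebra k A]
    (V : Submodule k A) : ℝ :=
  Filter.atTop.limsup fun s : ℕ => Real.logb s (Module.finrank k ↥(V ^ s))


namespace ASLAux

set_option linter.unusedSectionVars false

variable {ι : Type*} [PartialOrder ι] [Finite ι]



variable {ι : Type*} [PartialOrder ι] [Finite ι]

set_option linter.unusedSectionVars false

/-- a strictly monotone height function into ℕ with an explicit bound -/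
lemma exists_height (ι : Type*) [PartialOrder ι] [Finite ι] :
    ∃ (h : ι → ℕ) (B : ℕ), 2 ≤ B ∧ (∀ i, h i + 1 < B) ∧ StrictMono h := by
  classical
  cases isEmpty_or_nonempty ι with
  | inl hempty =>
    exact ⟨fun i => 0, 2, le_rfl, fun i => (IsEmpty.false i).elim,
      fun a b _ => (IsEmpty.false a).elim⟩
  | inr hne =>
    have : Fintype ι := Fintype.ofFinite ι
    have : Fintype (LinearExtension ι) := ‹Fintype ι›
    set n := Fintype.card (LinearExtension ι) with hn
    have e := monoEquivOfFin (LinearExtension ι) hn.symm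
    refine ⟨fun i => (e.symm (toLinearExtension i) : ℕ), n + 2, by omega, fun i => ?_, ?_⟩
    · show (e.symm (toLinearExtension i) : ℕ) + 1 < n + 2
      have := (e.symm (toLinearExtension i)).isLt
      omega
    · intro a b hab
      have h1 : toLinearExtension a < toLinearExtension b := by
        refine lt_of_le_of_ne (toLinearExtension.monotone hab.le) ?_
        intro hEq
        exact hab.ne hEq
      have := e.symm.strictMono h1
      exact_mod_cast this

/-- base-B measure of a list -/
def meas (h : ι → ℕ) (B : ℕ) : List ι → ℕ
  | [] => 0
  | a :: l => (h a + 1) * B ^ l.length + meas h B l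

variable {h : ι → ℕ} {B : ℕ}

lemma meas_lt (hB : ∀ i, h i + 1 < B) : ∀ l : List ι, meas h B l < B ^ l.length
  | [] => by simp [meas]
  | a :: l => by
    have ih := meas_lt hB l
    have h1 : h a + 2 ≤ B := hB a
    simp only [meas, List.length_cons, pow_succ]
    have h2 : (h a + 2) * B ^ l.length ≤ B ^ l.length * B := by
      rw [Nat.mul_comm (B ^ l.length) B]
      exact Nat.mul_le_mul_right _ h1
    have e1 : (h a + 2) * B ^ l.length = (h a + 1) * B ^ l.length + B ^ l.length := by ring
    omega

lemma le_meas_cons (a : ι) (l : List ι) : B ^ l.length ≤ meas h B (a :: l) := by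
  simp only [meas]
  have : 1 * B ^ l.length ≤ (h a + 1) * B ^ l.length :=
    Nat.mul_le_mul_right _ (by omega)
  omega

lemma meas_append (p l : List ι) :
    meas h B (p ++ l) = meas h B p * B ^ l.length + meas h B l := by
  induction p with
  | nil => simp [meas]
  | cons a p ih =>
    simp only [List.cons_append, meas, List.append_eq, ih]
    rw [List.length_append, pow_add]
    ring

/-- appending a common prefix preserves strict measure inequality, provided lengths weakly agree -/
lemma meas_append_lt (p : List ι) {t₁ t₂ : List ι} (hlen : t₁.length ≤ t₂.length)
    (hB : 1 ≤ B) (hm : meas h B t₁ < meas h B t₂) :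
    meas h B (p ++ t₁) < meas h B (p ++ t₂) := by
  rw [meas_append, meas_append]
  have hpow : B ^ t₁.length ≤ B ^ t₂.length := Nat.pow_le_pow_right hB hlen
  have := Nat.mul_le_mul_left (meas h B p) hpow
  omega

/-- tail comparison, case of a single replacement element -/
lemma meas_single_lt (hB : ∀ i, h i + 1 < B) (lam a b : ι) (q : List ι) :
    meas h B (lam :: q) < meas h B (a :: b :: q) := by
  have h1 := meas_lt hB (lam :: q)
  have h2 := le_meas_cons (h := h) (B := B) a (b :: q)
  simp only [List.length_cons] at h1 h2
  omega

/-- tail comparison, case of a two-element replacement with smaller head -/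
lemma meas_pair_lt (hB : ∀ i, h i + 1 < B) {lam a : ι} (hlt : h lam < h a) (mu b : ι)
    (q : List ι) : meas h B (lam :: mu :: q) < meas h B (a :: b :: q) := by
  have h1 := meas_lt hB (mu :: q)
  simp only [meas, List.length_cons] at h1 ⊢
  have h3 : (h lam + 2) * B ^ (q.length + 1) ≤ (h a + 1) * B ^ (q.length + 1) :=
    Nat.mul_le_mul_right _ (by omega)
  have e1 : (h lam + 2) * B ^ (q.length + 1)
      = (h lam + 1) * B ^ (q.length + 1) + B ^ (q.length + 1) := by ring
  omega

/-- every list which is not a chain has an adjacent violating pair -/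
lemma exists_violation {R : ι → ι → Prop} : ∀ {l : List ι}, ¬ l.Chain' R →
    ∃ p a b q, l = p ++ a :: b :: q ∧ ¬ R a b
  | [], hl => absurd List.isChain_nil hl
  | [a], hl => absurd (List.isChain_singleton a) hl
  | a :: b :: l, hl => by
    simp only [List.Chain', List.isChain_cons_cons] at hl
    push_neg at hl
    by_cases hab : R a b
    · obtain ⟨p, x, y, q, hEq, hxy⟩ := exists_violation (hl hab)
      exact ⟨a :: p, x, y, q, by rw [List.cons_append, hEq], hxy⟩
    · exact ⟨[], a, b, l, rfl, hab⟩



section Counting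

lemma posetRank_mem (ι : Type*) [PartialOrder ι] [Finite ι] :
    ∃ f : Fin (posetRank ι) → ι, StrictMono f := by
  have hne : {s : ℕ | ∃ f : Fin s → ι, StrictMono f}.Nonempty :=
    ⟨0, fun a => a.elim0, fun a => a.elim0⟩
  have hbdd : BddAbove {s : ℕ | ∃ f : Fin s → ι, StrictMono f} := by
    refine ⟨Nat.card ι, fun s hs => ?_⟩
    obtain ⟨f, hf⟩ := hs
    simpa using Nat.card_le_card_of_injective f hf.injective
  exact Nat.sSup_mem hne hbdd

lemma le_posetRank {m : ℕ} (f : Fin m → ι) (hf : StrictMono f) : m ≤ posetRank ι := by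
  have hbdd : BddAbove {s : ℕ | ∃ f : Fin s → ι, StrictMono f} := by
    refine ⟨Nat.card ι, fun s hs => ?_⟩
    obtain ⟨g, hg⟩ := hs
    simpa using Nat.card_le_card_of_injective g hg.injective
  exact le_csSup hbdd ⟨f, hf⟩

/-- dedup of a sorted list is a strict chain of length at most the poset rank -/
lemma dedup_length_le [DecidableEq ι] {l : List ι} (hl : l.Chain' (· ≤ ·)) :
    l.dedup.length ≤ posetRank ι := by
  have hpw : l.Pairwise (· ≤ ·) := List.isChain_iff_pairwise.mp hl
  have hsub : l.dedup.Pairwise (· ≤ ·) := List.Pairwise.sublist (List.dedup_sublist l) hpw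
  have hnd : l.dedup.Nodup := List.nodup_dedup l
  have hlt : l.dedup.Pairwise (· < ·) :=
    (hsub.and hnd).imp (fun h => lt_of_le_of_ne h.1 h.2)
  refine le_posetRank (fun j => l.dedup.get j) ?_
  intro i j hij
  exact List.pairwise_iff_get.mp hlt i j hij

instance instFiniteChains (s : ℕ) : Finite {l : List ι // l.Chain' (· ≤ ·) ∧ l.length ≤ s} := by
  have hfin : {l : List ι | l.length ≤ s}.Finite := List.finite_length_le ι s
  have : Finite {l : List ι // l.length ≤ s} := hfin.to_subtype
  exact Finite.of_injective
    (fun l => (⟨l.1, l.2.2⟩ : {l : List ι // l.length ≤ s}))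
    (fun l₁ l₂ hEq => Subtype.ext (by simpa using congrArg Subtype.val hEq))

/-- upper bound for the number of standard monomials -/
lemma card_chains_le (s : ℕ) :
    Nat.card {l : List ι // l.Chain' (· ≤ ·) ∧ l.length ≤ s}
      ≤ ((Nat.card ι + 1) * (s + 1)) ^ posetRank ι := by
  classical
  set r := posetRank ι with hr
  set Φ : {l : List ι // l.Chain' (· ≤ ·) ∧ l.length ≤ s} →
      (Fin r → Option (ι × Fin (s + 1))) :=
    fun l j => (l.1.dedup[(j : ℕ)]?).map
      (fun i => (i, ⟨l.1.count i, Nat.lt_succ_of_le ((List.count_le_length (a := i) (l := l.1)).trans l.2.2)⟩))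
    with hΦ
  have hinj : Function.Injective Φ := by
    rintro ⟨l₁, hc₁, hs₁⟩ ⟨l₂, hc₂, hs₂⟩ hEq
    have hd₁ : l₁.dedup.length ≤ r := dedup_length_le hc₁
    have hd₂ : l₂.dedup.length ≤ r := dedup_length_le hc₂
    have hEq' : ∀ j : Fin r, Φ ⟨l₁, hc₁, hs₁⟩ j = Φ ⟨l₂, hc₂, hs₂⟩ j := fun j =>
      congrFun hEq j
    -- dedups agree
    have hded : l₁.dedup = l₂.dedup := by
      apply List.ext_getElem?
      intro m
      by_cases hm : m < r
      · have hthis := hEq' ⟨m, hm⟩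
        simp only [hΦ] at hthis
        cases h₁ : l₁.dedup[m]? <;> cases h₂ : l₂.dedup[m]? <;>
          rw [h₁, h₂] at hthis <;> simp_all
      · rw [List.getElem?_eq_none_iff.mpr (le_trans hd₁ (le_of_not_gt hm)),
          List.getElem?_eq_none_iff.mpr (le_trans hd₂ (le_of_not_gt hm))]
    -- counts agree
    have hcount : ∀ i : ι, l₁.count i = l₂.count i := by
      intro i
      by_cases hi : i ∈ l₁.dedup
      · obtain ⟨j, hj⟩ := List.mem_iff_get.mp hi
        have hjr : (j : ℕ) < r := lt_of_lt_of_le j.isLt hd₁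
        have hkey := hEq' ⟨(j : ℕ), hjr⟩
        simp only [hΦ] at hkey
        rw [← hded, List.getElem?_eq_getElem (show (j:ℕ) < l₁.dedup.length from j.isLt), ← List.get_eq_getElem, hj] at hkey
        have h2 := congrArg (fun o : Option (ι × Fin (s+1)) =>
          (((o.getD (i, 0)).2 : Fin (s+1)) : ℕ)) hkey
        simpa using h2
      · have hi₂ : i ∉ l₂.dedup := by rw [← hded]; exact hi
        rw [List.mem_dedup] at hi hi₂
        rw [List.count_eq_zero_of_not_mem hi, List.count_eq_zero_of_not_mem hi₂]
    have hperm : l₁.Perm l₂ := List.perm_iff_count.mpr hcount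
    have : l₁ = l₂ :=
      List.Perm.eq_of_pairwise' (List.isChain_iff_pairwise.mp hc₁)
        (List.isChain_iff_pairwise.mp hc₂) hperm
    exact Subtype.ext this
  haveI : Fintype ι := Fintype.ofFinite ι
  calc Nat.card {l : List ι // l.Chain' (· ≤ ·) ∧ l.length ≤ s}
      ≤ Nat.card (Fin r → Option (ι × Fin (s + 1))) := Nat.card_le_card_of_injective Φ hinj
    _ = (Nat.card ι * (s + 1) + 1) ^ r := by
        rw [Nat.card_fun]
        simp [Nat.card_eq_fintype_card]
    _ ≤ ((Nat.card ι + 1) * (s + 1)) ^ r := by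
        apply Nat.pow_le_pow_left
        nlinarith [Nat.zero_le (Nat.card ι), Nat.zero_le s]

/-- lower bound for the number of standard monomials -/
lemma le_card_chains (s : ℕ) :
    (s / posetRank ι + 1) ^ posetRank ι
      ≤ Nat.card {l : List ι // l.Chain' (· ≤ ·) ∧ l.length ≤ s} := by
  classical
  set r := posetRank ι with hr
  obtain ⟨f, hf⟩ := posetRank_mem ι
  set L : (Fin r → Fin (s / r + 1)) → List ι :=
    fun m => (List.ofFn fun j : Fin r => List.replicate (m j) (f j)).flatten with hL
  have hchain : ∀ m, (L m).Chain' (· ≤ ·) := by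
    intro m
    apply List.isChain_iff_pairwise.mpr
    rw [hL, List.pairwise_flatten]
    constructor
    · intro l hl
      rw [List.mem_ofFn] at hl
      obtain ⟨j, rfl⟩ := hl
      exact List.pairwise_replicate.mpr (Or.inr le_rfl)
    · rw [List.pairwise_ofFn]
      intro i j hij x hx y hy
      rw [List.eq_of_mem_replicate hx, List.eq_of_mem_replicate hy]
      exact (hf hij).le
  have hlen : ∀ m, (L m).length ≤ s := by
    intro m
    rw [hL, List.length_flatten, List.map_ofFn]
    calc (List.ofFn (List.length ∘ fun j : Fin r => List.replicate ((m j : ℕ)) (f j))).sum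
        = ∑ j : Fin r, (m j : ℕ) := by
          rw [List.sum_ofFn]; simp
      _ ≤ ∑ _j : Fin r, s / r := Finset.sum_le_sum (fun j _ => Nat.le_of_lt_succ (m j).isLt)
      _ = r * (s / r) := by simp [Finset.sum_const]
      _ ≤ s := by rw [Nat.mul_comm]; exact Nat.div_mul_le_self s r
  have hcount : ∀ m (j : Fin r), (L m).count (f j) = (m j : ℕ) := by
    intro m j
    rw [hL, List.count_flatten, List.map_ofFn, List.sum_ofFn]
    have : ∀ j' : Fin r, ((List.count (f j)) ∘ fun j' => List.replicate ((m j' : ℕ)) (f j')) j'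
        = if j' = j then (m j : ℕ) else 0 := by
      intro j'
      simp only [Function.comp_apply, List.count_replicate, beq_iff_eq]
      by_cases hjj : j' = j
      · subst hjj; simp
      · have hfne : f j' ≠ f j := fun hEq => hjj (hf.injective hEq)
        simp [hjj, hfne]
    rw [Finset.sum_congr rfl (fun j' _ => this j')]
    simp
  have hinj : Function.Injective
      (fun m : Fin r → Fin (s / r + 1) =>
        (⟨L m, hchain m, hlen m⟩ : {l : List ι // l.Chain' (· ≤ ·) ∧ l.length ≤ s})) := by
    intro m₁ m₂ hEq
    have hLe : L m₁ = L m₂ := congrArg Subtype.val hEq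
    funext j
    have := hcount m₁ j
    rw [hLe, hcount m₂ j] at this
    exact (Fin.val_injective this.symm)
  calc (s / r + 1) ^ r = Nat.card (Fin r → Fin (s / r + 1)) := by
        rw [Nat.card_fun]; simp
    _ ≤ Nat.card {l : List ι // l.Chain' (· ≤ ·) ∧ l.length ≤ s} :=
        Nat.card_le_card_of_injective _ hinj



end Counting

open Filter Real in
lemma tendsto_logb_of_poly_growth (r K : ℕ) (c : ℕ → ℕ) (hr : 1 ≤ r) (hK : 1 ≤ K)
    (hlow : ∀ s, (s / r + 1) ^ r ≤ c s)
    (hhigh : ∀ s, c s ≤ (K * (s + 1)) ^ r) :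
    Filter.Tendsto (fun s : ℕ => Real.logb s (c s)) Filter.atTop (nhds r) := by
  have hrpos : (0:ℝ) < r := by exact_mod_cast hr
  have hts : Tendsto (fun s : ℕ => Real.log s) atTop atTop :=
    Real.tendsto_log_atTop.comp tendsto_natCast_atTop_atTop
  have hg : Tendsto (fun s : ℕ => (r:ℝ) - (r * Real.log r) / Real.log s) atTop (nhds r) := by
    have h0 : Tendsto (fun s : ℕ => ((r : ℝ) * Real.log r) / Real.log s) atTop (nhds 0) :=
      Filter.Tendsto.div_atTop tendsto_const_nhds hts
    simpa using tendsto_const_nhds.sub h0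
  have hh : Tendsto (fun s : ℕ => (r:ℝ) + (r * Real.log (2*(K:ℝ))) / Real.log s) atTop (nhds r) := by
    have h0 : Tendsto (fun s : ℕ => ((r : ℝ) * Real.log (2*(K:ℝ))) / Real.log s) atTop (nhds 0) :=
      Filter.Tendsto.div_atTop tendsto_const_nhds hts
    simpa using tendsto_const_nhds.add h0
  refine tendsto_of_tendsto_of_tendsto_of_le_of_le' hg hh ?_ ?_
  · -- lower bound, eventually
    filter_upwards [Filter.eventually_ge_atTop 2] with s hs
    have hs1 : (1:ℝ) < (s:ℝ) := by exact_mod_cast hs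
    have hx : (0:ℝ) < Real.log s := Real.log_pos hs1
    have hdivle : (s:ℝ)/(r:ℝ) ≤ ((s/r : ℕ) : ℝ) + 1 := by
      rw [div_le_iff₀ hrpos]
      have h1 : s < (s/r + 1) * r := by
        have hdm := Nat.div_add_mod s r
        have hmod : s % r < r := Nat.mod_lt s (by omega)
        have he : (s/r + 1) * r = r * (s/r) + r := by ring
        omega
      have h2 : (s:ℝ) < ((s/r + 1 : ℕ):ℝ) * (r:ℝ) := by exact_mod_cast h1
      push_cast at h2 ⊢
      linarith
    have hspos : (0:ℝ) < (s:ℝ) := by linarith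
    have hdpos : (0:ℝ) < (s:ℝ)/(r:ℝ) := div_pos hspos hrpos
    have h1 : ((s:ℝ)/(r:ℝ))^r ≤ ((c s : ℕ):ℝ) := by
      calc ((s:ℝ)/(r:ℝ))^r ≤ (((s/r : ℕ) : ℝ) + 1)^r :=
            pow_le_pow_left₀ (le_of_lt hdpos) hdivle r
        _ = (((s/r + 1 : ℕ)) : ℝ)^r := by push_cast; ring
        _ ≤ ((c s : ℕ):ℝ) := by exact_mod_cast hlow s
    have h3 : Real.log (((s:ℝ)/(r:ℝ))^r) ≤ Real.log (c s) :=
      Real.log_le_log (pow_pos hdpos r) h1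
    have h4 : Real.log (((s:ℝ)/(r:ℝ))^r) = r * (Real.log s - Real.log r) := by
      rw [Real.log_pow, Real.log_div (ne_of_gt hspos) (ne_of_gt hrpos)]
    have h5 : ((r:ℝ) * (Real.log s - Real.log r)) / Real.log s ≤ Real.log (c s) / Real.log s := by
      apply div_le_div_of_nonneg_right ?_ hx.le
      · rw [← h4]; exact h3
    have h6 : ((r:ℝ) * (Real.log s - Real.log r)) / Real.log s
        = (r:ℝ) - (r * Real.log r) / Real.log s := by
      field_simp
    rw [← Real.log_div_log, ← h6]
    exact h5
  · -- upper bound, eventually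
    filter_upwards [Filter.eventually_ge_atTop 2] with s hs
    have hs1 : (1:ℝ) < (s:ℝ) := by exact_mod_cast hs
    have hx : (0:ℝ) < Real.log s := Real.log_pos hs1
    have hcpos : (0:ℝ) < ((c s : ℕ):ℝ) := by
      have : 1 ≤ c s := le_trans (Nat.one_le_pow r (s/r+1) (Nat.succ_pos _)) (hlow s)
      exact_mod_cast this
    have h1 : c s ≤ (2*K*s)^r := by
      refine le_trans (hhigh s) (Nat.pow_le_pow_left ?_ r)
      nlinarith
    have h2 : ((c s:ℕ):ℝ) ≤ ((2*K*s:ℕ):ℝ)^r := by exact_mod_cast h1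
    have h2Kpos : (0:ℝ) < ((2*K*s:ℕ):ℝ) := by
      have : 1 ≤ 2*K*s := by nlinarith
      exact_mod_cast Nat.lt_of_lt_of_le Nat.zero_lt_one this
    have h3 : Real.log (c s) ≤ r * Real.log ((2*K*s:ℕ):ℝ) := by
      rw [← Real.log_pow]
      exact Real.log_le_log hcpos h2
    have h4 : Real.log ((2*K*s:ℕ):ℝ) = Real.log ((2*K:ℕ):ℝ) + Real.log s := by
      push_cast
      rw [← Real.log_mul (by positivity) (ne_of_gt (show (0:ℝ) < (s:ℝ) by linarith))]
    have h5 : Real.log (c s) / Real.log s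
        ≤ ((r:ℝ) * (Real.log ((2*K:ℕ):ℝ) + Real.log s)) / Real.log s := by
      apply div_le_div_of_nonneg_right ?_ hx.le
      rw [← h4]; exact h3
    have h6 : ((r:ℝ) * (Real.log ((2*K:ℕ):ℝ) + Real.log s)) / Real.log s
        = (r:ℝ) + ((r:ℝ) * Real.log (2*(K:ℝ))) / Real.log s := by
      push_cast
      field_simp
      ring
    rw [← Real.log_div_log]
    rw [h6] at h5
    exact h5


section Algebra

variable {k : Type*} [Field k] {A : Type*} [Ring A] [Algebra k A] {𝒜 : ℕ → Submodule k A}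
variable {h : ι → ℕ} {B : ℕ}

/-- the span of standard monomials of length at most `t` -/
def stdSpan (Q : QuantumGradedASL k A 𝒜 ι) (t : ℕ) : Submodule k A :=
  Submodule.span k
    {x : A | ∃ l : List ι, l.Chain' (· ≤ ·) ∧ l.length ≤ t ∧ x = (l.map Q.elem).prod}

lemma stdSpan_mono (Q : QuantumGradedASL k A 𝒜 ι) {t t' : ℕ} (ht : t ≤ t') :
    stdSpan Q t ≤ stdSpan Q t' :=
  Submodule.span_mono (fun x => by rintro ⟨l, h1, h2, rfl⟩; exact ⟨l, h1, h2.trans ht, rfl⟩)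

lemma map_span_mem {T : Set A} {M : Submodule k A} (f : A →ₗ[k] A) {x : A}
    (hx : x ∈ Submodule.span k T) (hT : ∀ y ∈ T, f y ∈ M) : f x ∈ M := by
  have h1 : f x ∈ Submodule.map f (Submodule.span k T) := ⟨x, hx, rfl⟩
  rw [Submodule.map_span] at h1
  refine Submodule.span_le.mpr ?_ h1
  rintro _ ⟨y, hy, rfl⟩
  exact hT y hy

lemma prod_mem_stdSpan (Q : QuantumGradedASL k A 𝒜 ι) (l : List ι) :
    ((l.map Q.elem).prod) ∈ stdSpan Q l.length := by
  obtain ⟨h, B, hB2, hBlt, hmono⟩ := exists_height ι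
  suffices H : ∀ N (l : List ι), meas h B l ≤ N → (l.map Q.elem).prod ∈ stdSpan Q l.length from
    H (meas h B l) l le_rfl
  intro N
  induction N using Nat.strong_induction_on with
  | _ N IH =>
    intro l hl
    by_cases hc : l.Chain' (· ≤ ·)
    · exact Submodule.subset_span ⟨l, hc, le_rfl, rfl⟩
    obtain ⟨p, a, b, q, rfl, hab⟩ := exists_violation hc
    set P := (p.map Q.elem).prod with hP
    set S := (q.map Q.elem).prod with hS
    set f : A →ₗ[k] A := (LinearMap.mulLeft k P).comp (LinearMap.mulRight k S) with hf
    have hfx : ∀ x : A, f x = P * (x * S) := fun x => by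
      simp [hf]
    have hwp : ∀ m : List ι, ((p ++ m ++ q).map Q.elem).prod = P * (((m.map Q.elem).prod) * S) := by
      intro m
      simp [List.map_append, List.prod_append, hP, hS]
    -- each generator of the straightening span is mapped into the right standard span
    have hT : ∀ (x : A), x ∈ {x : A | ∃ lam : ι, lam < a ∧ lam < b ∧
        (x = Q.elem lam ∨ ∃ mu : ι, lam ≤ mu ∧ x = Q.elem lam * Q.elem mu)} →
        f x ∈ stdSpan Q (p ++ a :: b :: q).length := by
      rintro x ⟨lam, hla, hlb, hx | ⟨mu, hlm, hx⟩⟩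
      · have hmeas : meas h B (p ++ [lam] ++ q) < meas h B (p ++ a :: b :: q) := by
          rw [List.append_assoc]
          exact meas_append_lt p (by simp) (by omega) (meas_single_lt hBlt lam a b q)
        have hlen : (p ++ [lam] ++ q).length ≤ (p ++ a :: b :: q).length := by
          simp [List.length_append]
        have hmem := IH (meas h B (p ++ [lam] ++ q)) (by omega) (p ++ [lam] ++ q) le_rfl
        have : f x = ((p ++ [lam] ++ q).map Q.elem).prod := by
          rw [hx, hfx, hwp [lam]]; simp
        rw [this]
        exact stdSpan_mono Q hlen hmem
      · have hmeas : meas h B (p ++ [lam, mu] ++ q) < meas h B (p ++ a :: b :: q) := by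
          rw [List.append_assoc]
          exact meas_append_lt p (by simp) (by omega)
            (meas_pair_lt hBlt (hmono hla) mu b q)
        have hlen : (p ++ [lam, mu] ++ q).length ≤ (p ++ a :: b :: q).length := by
          simp [List.length_append]
        have hmem := IH (meas h B (p ++ [lam, mu] ++ q)) (by omega) (p ++ [lam, mu] ++ q) le_rfl
        have : f x = ((p ++ [lam, mu] ++ q).map Q.elem).prod := by
          rw [hx, hfx, hwp [lam, mu]]; simp [mul_assoc]
        rw [this]
        exact stdSpan_mono Q hlen hmem
    have hwl : ((p ++ a :: b :: q).map Q.elem).prod = f (Q.elem a * Q.elem b) := by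
      rw [hfx]
      have := hwp [a, b]
      simp only [List.map_cons, List.map_nil, List.prod_cons, List.prod_nil, mul_one] at this
      rw [← this]
      simp [mul_assoc]
    rw [hwl]
    by_cases hba : b ≤ a
    · obtain ⟨c, hc0, hcm⟩ := Q.comm a b
      have hblta : b < a := lt_of_le_of_ne hba (fun hEq => hab (le_of_eq hEq.symm))
      have h1 : f (Q.elem a * Q.elem b - c • (Q.elem b * Q.elem a))
          ∈ stdSpan Q (p ++ a :: b :: q).length := map_span_mem f hcm hT
      have hmeas : meas h B (p ++ [b, a] ++ q) < meas h B (p ++ a :: b :: q) := by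
        rw [List.append_assoc]
        exact meas_append_lt p (by simp) (by omega) (meas_pair_lt hBlt (hmono hblta) a b q)
      have h2 : f (Q.elem b * Q.elem a) ∈ stdSpan Q (p ++ a :: b :: q).length := by
        have hmem := IH (meas h B (p ++ [b, a] ++ q)) (by omega) (p ++ [b, a] ++ q) le_rfl
        have hlen : (p ++ [b, a] ++ q).length ≤ (p ++ a :: b :: q).length := by
          simp [List.length_append]
        have : f (Q.elem b * Q.elem a) = ((p ++ [b, a] ++ q).map Q.elem).prod := by
          rw [hfx, hwp [b, a]]; simp [mul_assoc]
        rw [this]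
        exact stdSpan_mono Q hlen hmem
      have : f (Q.elem a * Q.elem b)
          = f (Q.elem a * Q.elem b - c • (Q.elem b * Q.elem a)) + c • f (Q.elem b * Q.elem a) := by
        rw [← LinearMap.map_smul, ← LinearMap.map_add]
        congr 1
        abel
      rw [this]
      exact Submodule.add_mem _ h1 (Submodule.smul_mem _ c h2)
    · exact map_span_mem f (Q.straighten a b hab hba) hT



variable (Q : QuantumGradedASL k A 𝒜 ι)

lemma pow_le_pow_of_one_mem {V : Submodule k A} (h1 : (1 : A) ∈ V) {t s : ℕ} (hts : t ≤ s) :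
    V ^ t ≤ V ^ s := by
  induction s, hts using Nat.le_induction with
  | base => exact le_rfl
  | succ s hts ih =>
    refine le_trans ih ?_
    intro x hx
    have : x * 1 ∈ V ^ s * V := Submodule.mul_mem_mul hx h1
    rwa [mul_one, ← pow_succ] at this

lemma prod_mem_pow (l : List ι) :
    ((l.map Q.elem).prod) ∈
      (Submodule.span k (insert (1 : A) (Set.range Q.elem))) ^ l.length := by
  induction l with
  | nil =>
    rw [List.map_nil, List.prod_nil, List.length_nil, pow_zero, Submodule.one_eq_span]
    exact Submodule.subset_span rfl
  | cons a l ih =>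
    rw [List.map_cons, List.prod_cons, List.length_cons, pow_succ']
    exact Submodule.mul_mem_mul
      (Submodule.subset_span (Set.mem_insert_iff.mpr (Or.inr ⟨a, rfl⟩))) ih

lemma pow_span_eq (s : ℕ) :
    (Submodule.span k (insert (1 : A) (Set.range Q.elem))) ^ s = stdSpan Q s := by
  set V := Submodule.span k (insert (1 : A) (Set.range Q.elem)) with hV
  have h1V : (1 : A) ∈ V := Submodule.subset_span (Set.mem_insert _ _)
  apply le_antisymm
  · induction s with
    | zero =>
      rw [pow_zero, Submodule.one_eq_span]
      refine Submodule.span_le.mpr ?_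
      rintro x hx
      rw [Set.mem_singleton_iff] at hx
      subst hx
      exact Submodule.subset_span ⟨[], List.isChain_nil, by simp, by simp⟩
    | succ s ih =>
      rw [pow_succ]
      refine Submodule.mul_le.mpr ?_
      intro x hx y hy
      have hx' : x ∈ stdSpan Q s := ih hx
      clear hx
      induction hy using Submodule.span_induction with
      | mem y hy =>
        rcases Set.mem_insert_iff.mp hy with rfl | ⟨i, rfl⟩
        · rw [mul_one]
          exact stdSpan_mono Q (Nat.le_succ s) hx'
        · -- x * elem i : induct on x
          induction hx' using Submodule.span_induction with
          | mem x hx =>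
            obtain ⟨l, hcl, hls, rfl⟩ := hx
            have : (l.map Q.elem).prod * Q.elem i = ((l ++ [i]).map Q.elem).prod := by
              simp [List.map_append, List.prod_append]
            rw [this]
            refine stdSpan_mono Q ?_ (prod_mem_stdSpan Q (l ++ [i]))
            simp [List.length_append]
            omega
          | zero => rw [zero_mul]; exact Submodule.zero_mem _
          | add x y _ _ hx hy => rw [add_mul]; exact Submodule.add_mem _ hx hy
          | smul c x _ hx => rw [smul_mul_assoc]; exact Submodule.smul_mem _ c hx
      | zero => rw [mul_zero]; exact Submodule.zero_mem _
      | add y z _ _ hy hz => rw [mul_add]; exact Submodule.add_mem _ hy hz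
      | smul c y _ hy => rw [mul_smul_comm]; exact Submodule.smul_mem _ c hy
  · refine Submodule.span_le.mpr ?_
    rintro x ⟨l, hcl, hls, rfl⟩
    exact pow_le_pow_of_one_mem h1V hls (prod_mem_pow Q l)

instance (s : ℕ) : Finite {l : List ι // l.Chain' (· ≤ ·) ∧ l.length ≤ s} := by
  have hfin : {l : List ι | l.length ≤ s}.Finite := List.finite_length_le ι s
  have : Finite {l : List ι // l.length ≤ s} := hfin.to_subtype
  exact Finite.of_injective
    (fun l => (⟨l.1, l.2.2⟩ : {l : List ι // l.length ≤ s}))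
    (fun l₁ l₂ hEq => Subtype.ext (by simpa using congrArg Subtype.val hEq))

lemma finrank_pow_eq (s : ℕ) :
    Module.finrank k ↥((Submodule.span k (insert (1 : A) (Set.range Q.elem))) ^ s)
      = Nat.card {l : List ι // l.Chain' (· ≤ ·) ∧ l.length ≤ s} := by
  classical
  letI : Fintype {l : List ι // l.Chain' (· ≤ ·) ∧ l.length ≤ s} := Fintype.ofFinite _
  set b : {l : List ι // l.Chain' (· ≤ ·) ∧ l.length ≤ s} → A :=
    fun l => ((l : List ι).map Q.elem).prod with hb
  have hinj : Function.Injective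
      (fun l : {l : List ι // l.Chain' (· ≤ ·) ∧ l.length ≤ s} =>
        (⟨l.1, l.2.1⟩ : {l : List ι // l.Chain' (· ≤ ·)})) :=
    fun l₁ l₂ hEq => Subtype.ext (by simpa using congrArg Subtype.val hEq)
  have hli : LinearIndependent k b := Q.indep.comp _ hinj
  have hrange : Set.range b
      = {x : A | ∃ l : List ι, l.Chain' (· ≤ ·) ∧ l.length ≤ s ∧ x = (l.map Q.elem).prod} := by
    ext x
    constructor
    · rintro ⟨⟨l, hcl, hls⟩, rfl⟩
      exact ⟨l, hcl, hls, rfl⟩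
    · rintro ⟨l, hcl, hls, rfl⟩
      exact ⟨⟨l, hcl, hls⟩, rfl⟩
  rw [pow_span_eq Q s]
  have hss : stdSpan Q s = Submodule.span k (Set.range b) := by rw [stdSpan, hrange]
  rw [hss, Nat.card_eq_fintype_card, finrank_span_eq_card hli]


end Algebra

end ASLAux

/-- If `A` is a quantum graded algebra with a straightening law on the finite
poset `(Π, ≤st)` then the Gelfand–Kirillov dimension of `A` (computed from the generating
subspace spanned by `Π ∪ {1}`) equals `rk Π`, the rank of the poset `Π`. -/
theorem gkDim_eq_posetRank {k : Type*} [Field k] {A : Type*} [Ring A] [Algebra k A]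
    {𝒜 : ℕ → Submodule k A} {ι : Type*} [PartialOrder ι] [Finite ι]
    (Q : QuantumGradedASL k A 𝒜 ι) :
    gkDim k (Submodule.span k (insert (1 : A) (Set.range Q.elem))) = (posetRank ι : ℝ) := by
  classical
  set r := posetRank ι with hr
  have hfr := ASLAux.finrank_pow_eq Q
  unfold gkDim
  have hfun : (fun s : ℕ => Real.logb s
        (Module.finrank k ↥((Submodule.span k (insert (1:A) (Set.range Q.elem))) ^ s)))
      = fun s : ℕ => Real.logb s
        ((Nat.card {l : List ι // l.Chain' (· ≤ ·) ∧ l.length ≤ s} : ℕ)) :=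
    funext fun s => by rw [hfr s]
  rw [hfun]
  rcases Nat.eq_zero_or_pos r with h0 | hpos
  · -- the poset is empty
    have hempty : IsEmpty ι := by
      by_contra hne
      rw [not_isEmpty_iff] at hne
      obtain ⟨i⟩ := hne
      have h1 : 1 ≤ posetRank ι := ASLAux.le_posetRank (fun _ : Fin 1 => i)
        (fun a b hab => ((ne_of_lt hab) (Subsingleton.elim a b)).elim)
      omega
    have hcard : ∀ s : ℕ, Nat.card {l : List ι // l.Chain' (· ≤ ·) ∧ l.length ≤ s} = 1 := by
      intro s
      have hu : ∀ l : List ι, l.Chain' (· ≤ ·) ∧ l.length ≤ s → l = [] := by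
        intro l _
        cases l with
        | nil => rfl
        | cons a _ => exact (IsEmpty.false a).elim
      haveI : Unique {l : List ι // l.Chain' (· ≤ ·) ∧ l.length ≤ s} :=
        ⟨⟨⟨[], List.isChain_nil, by simp⟩⟩, fun l => Subtype.ext (hu l.1 l.2)⟩
      exact Nat.card_unique
    simp only [hcard, Nat.cast_one, Real.logb_one]
    rw [Filter.limsup_const]
    rw [h0]; simp
  · have hlim := ASLAux.tendsto_logb_of_poly_growth r (Nat.card ι + 1)
      (fun s => Nat.card {l : List ι // l.Chain' (· ≤ ·) ∧ l.length ≤ s}) hpos (by omega)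
      (fun s => by rw [hr]; exact ASLAux.le_card_chains s)
      (fun s => by rw [hr]; exact ASLAux.card_chains_le s)
    exact hlim.limsup_eq
end

section
/- Let k be a field and let A be a quantum graded algebra with a straightening law on a finite poset (Π, ≤st). For α ∈ Π let I_α be the two-sided ideal of A generated by {γ ∈ Π : γ <st α}. Then every α ∈ Π is normal modulo I_α (i.e. its image in A/I_α is a normal element); in particular every minimal element of Π is a normal element of A. Moreover, if Π has a unique minimal element α, then α is a regular (non-zero-divisor) normal element of A. -/
namespace QASLAux

variable {ι : Type*}

/-- weighted measure of a word -/
def mes (f : ι → ℕ) (B : ℕ) : List ι → ℕ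
  | [] => 0
  | i :: w => (f i + 1) * B ^ w.length + mes f B w

lemma mes_append (f : ι → ℕ) (B : ℕ) (p r : List ι) :
    mes f B (p ++ r) = mes f B p * B ^ r.length + mes f B r := by
  induction p with
  | nil => simp [mes]
  | cons i p ih =>
      simp only [List.cons_append, mes, List.append_eq, List.length_append, ih, pow_add]
      ring

lemma mes_step2 {f : ι → ℕ} {B : ℕ} (hfB : ∀ i, f i + 1 < B) (p t : List ι) {x u : ι}
    (y v : ι) (h : f u < f x) :
    mes f B (p ++ u :: v :: t) < mes f B (p ++ x :: y :: t) := by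
  rw [mes_append, mes_append]
  refine Nat.add_lt_add_left ?_ _
  simp only [mes, List.length_cons, pow_succ]
  have h1 : 0 < B ^ t.length := pow_pos (by have := hfB u; omega) _
  have h2 := hfB v
  have h3 : (f u + 2) * (B ^ t.length * B) ≤ (f x + 1) * (B ^ t.length * B) :=
    Nat.mul_le_mul_right _ (by omega)
  nlinarith [Nat.mul_le_mul_right (B ^ t.length) (show f v + 1 ≤ B - 1 by omega),
    Nat.mul_le_mul_left (f u + 1) h1]

lemma mes_step1 {f : ι → ℕ} {B : ℕ} (hfB : ∀ i, f i + 1 < B) (p t : List ι) {x u : ι}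
    (y : ι) (h : f u < f x) :
    mes f B (p ++ u :: t) < mes f B (p ++ x :: y :: t) := by
  rw [mes_append, mes_append]
  simp only [mes, List.length_cons, pow_succ]
  have hB : 2 ≤ B := by have := hfB u; omega
  have h1 : 0 < B ^ t.length := pow_pos (by omega) _
  have h2 := hfB u
  have h4 : mes f B p * (B ^ t.length * B) ≤ mes f B p * (B ^ t.length * B * B) :=
    Nat.mul_le_mul_left _ (Nat.le_mul_of_pos_right _ (by omega))
  nlinarith [Nat.mul_le_mul_right (B ^ t.length) (show f u + 1 ≤ B - 1 by omega),
    Nat.mul_le_mul_right (B ^ t.length * B) (show 1 ≤ f x + 1 by omega)]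

lemma chain_or_violation (r : ι → ι → Prop) : ∀ w : List ι,
    w.Chain' r ∨ ∃ p x y t, w = p ++ x :: y :: t ∧ ¬ r x y := by
  intro w
  induction w with
  | nil => exact Or.inl List.isChain_nil
  | cons a w ih =>
    cases w with
    | nil => exact Or.inl (List.isChain_singleton _)
    | cons b t =>
      by_cases hab : r a b
      · rcases ih with hc | ⟨p, x, y, t', heq, hxy⟩
        · exact Or.inl (List.isChain_cons_cons.2 ⟨hab, hc⟩)
        · exact Or.inr ⟨a :: p, x, y, t', by simp [heq], hxy⟩
      · exact Or.inr ⟨[], a, b, t, rfl, hab⟩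

lemma exists_linext (ι : Type*) [PartialOrder ι] [Finite ι] :
    ∃ (f : ι → ℕ) (B : ℕ), 2 ≤ B ∧ (∀ i, f i + 1 < B) ∧ ∀ i j : ι, i < j → f i < f j := by
  classical
  cases nonempty_fintype ι
  refine ⟨fun i => (Finset.univ.filter (· < i)).card, Fintype.card ι + 2, by omega, ?_, ?_⟩
  · intro i
    have h := Finset.card_filter_le (Finset.univ : Finset ι) (· < i)
    rw [Finset.card_univ] at h
    exact Nat.lt_of_le_of_lt (Nat.add_le_add_right h 1) (by omega)
  · intro i j hij
    apply Finset.card_lt_card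
    refine (Finset.ssubset_iff_of_subset ?_).2 ⟨i, by simp [hij], by simp⟩
    intro z hz
    simp only [Finset.mem_filter, Finset.mem_univ, true_and] at hz ⊢
    exact hz.trans hij

end QASLAux

namespace QASLAux

variable {k : Type*} [Field k] {A : Type*} [Ring A] [Algebra k A]
  {𝒜 : ℕ → Submodule k A} {ι : Type*} [PartialOrder ι] [Finite ι]

/-- the span of the standard monomials -/
def stdSpan (Q : QuantumGradedASL k A 𝒜 ι) : Submodule k A :=
  Submodule.span k (Set.range
    (fun l : {l : List ι // l.Chain' (· ≤ ·)} => ((l : List ι).map Q.elem).prod))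

theorem prod_word_mem (Q : QuantumGradedASL k A 𝒜 ι) (w : List ι) :
    ((w.map Q.elem).prod) ∈ stdSpan Q := by
  obtain ⟨f, B, hB2, hfB, hmono⟩ := exists_linext ι
  suffices H : ∀ n, ∀ w : List ι, mes f B w < n → ((w.map Q.elem).prod) ∈ stdSpan Q from
    H (mes f B w + 1) w (Nat.lt_succ_self _)
  intro n
  induction n with
  | zero => exact fun w hw => absurd hw (Nat.not_lt_zero _)
  | succ n IH =>
    intro w hw
    rcases chain_or_violation (· ≤ ·) w with hc | ⟨p, x, y, t, rfl, hxy⟩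
    · exact Submodule.subset_span ⟨⟨w, hc⟩, rfl⟩
    · set P := (p.map Q.elem).prod with hP
      set T := (t.map Q.elem).prod with hT
      have hp2 : ∀ u v : ι,
          (((p ++ u :: v :: t).map Q.elem)).prod = P * (Q.elem u * Q.elem v) * T := by
        intro u v; simp [List.map_append, List.prod_append, mul_assoc, hP, hT]
      have hp1 : ∀ u : ι, (((p ++ u :: t).map Q.elem)).prod = P * Q.elem u * T := by
        intro u; simp [List.map_append, List.prod_append, mul_assoc, hP, hT]
      have hmes : mes f B (p ++ x :: y :: t) ≤ n := Nat.lt_succ_iff.mp hw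
      have hξ : ∀ ξ ∈ Submodule.span k {z : A | ∃ lam : ι, lam < x ∧ lam < y ∧
          (z = Q.elem lam ∨ ∃ mu : ι, lam ≤ mu ∧ z = Q.elem lam * Q.elem mu)},
          P * ξ * T ∈ stdSpan Q := by
        intro ξ hmemξ
        let L : A →ₗ[k] A := (LinearMap.mulRight k T).comp (LinearMap.mulLeft k P)
        have hLmem : L ξ ∈ Submodule.map L (Submodule.span k _) :=
          Submodule.mem_map_of_mem hmemξ
        rw [Submodule.map_span] at hLmem
        have hle : Submodule.span k (L '' {z : A | ∃ lam : ι, lam < x ∧ lam < y ∧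
            (z = Q.elem lam ∨ ∃ mu : ι, lam ≤ mu ∧ z = Q.elem lam * Q.elem mu)}) ≤
            stdSpan Q := by
          rw [Submodule.span_le]
          rintro _ ⟨z, ⟨lam, hl1, hl2, hz | ⟨mu, hmu, hz⟩⟩, rfl⟩
          · have hLz : L z = ((p ++ lam :: t).map Q.elem).prod := by
              rw [hz, hp1]; rfl
            rw [SetLike.mem_coe, hLz]
            exact IH _ (lt_of_lt_of_le (mes_step1 hfB p t y (hmono _ _ hl1)) hmes)
          · have hLz : L z = ((p ++ lam :: mu :: t).map Q.elem).prod := by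
              rw [hz, hp2]; rfl
            rw [SetLike.mem_coe, hLz]
            exact IH _ (lt_of_lt_of_le (mes_step2 hfB p t y mu (hmono _ _ hl1)) hmes)
        exact hle hLmem
      by_cases hyx : y ≤ x
      · have hylt : y < x := lt_of_le_of_ne hyx (by rintro rfl; exact hxy le_rfl)
        obtain ⟨c, hc0, hcm⟩ := Q.comm x y
        have key : (((p ++ x :: y :: t).map Q.elem)).prod
            = c • ((((p ++ y :: x :: t).map Q.elem)).prod)
              + P * (Q.elem x * Q.elem y - c • (Q.elem y * Q.elem x)) * T := by
          rw [hp2, hp2]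
          simp only [mul_sub, sub_mul, mul_smul_comm, smul_mul_assoc]
          rw [add_comm, sub_add_cancel]
        rw [key]
        refine Submodule.add_mem _ (Submodule.smul_mem _ _ (IH _ ?_)) (hξ _ hcm)
        exact lt_of_lt_of_le (mes_step2 hfB p t y x (hmono _ _ hylt)) hmes
      · exact (hp2 x y) ▸ hξ _ (Q.straighten x y hxy hyx)

lemma exists_word (Q : QuantumGradedASL k A 𝒜 ι) : ∀ l : List A,
    (∀ x ∈ l, x ∈ Set.range Q.elem) → ∃ w : List ι, w.map Q.elem = l := by
  intro l
  induction l with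
  | nil => exact fun _ => ⟨[], rfl⟩
  | cons x l ih =>
    intro h
    obtain ⟨i, hi⟩ := h x (List.mem_cons_self)
    obtain ⟨w, hw⟩ := ih fun z hz => h z (List.mem_cons_of_mem _ hz)
    exact ⟨i :: w, by simp [hi, hw]⟩

theorem mem_stdSpan (Q : QuantumGradedASL k A 𝒜 ι) (y : A) : y ∈ stdSpan Q := by
  have hy : y ∈ Subalgebra.toSubmodule (Algebra.adjoin k (Set.range Q.elem)) := by
    rw [Q.gen]; exact Submodule.mem_top
  rw [Algebra.adjoin_eq_span] at hy
  refine Submodule.span_le.mpr ?_ hy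
  intro z hz
  obtain ⟨l, hl, rfl⟩ := Submonoid.exists_list_of_mem_closure hz
  obtain ⟨w, rfl⟩ := exists_word Q l hl
  exact prod_word_mem Q w

end QASLAux

namespace QASLAux

variable {k : Type*} [Field k] {A : Type*} [Ring A] [Algebra k A]
  {𝒜 : ℕ → Submodule k A} {ι : Type*} [PartialOrder ι] [Finite ι]

lemma exact_comm (Q : QuantumGradedASL k A 𝒜 ι) {a : ι} (hmin : ∀ b : ι, ¬ b < a) (i : ι) :
    ∃ c : k, c ≠ 0 ∧ Q.elem a * Q.elem i = c • (Q.elem i * Q.elem a) := by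
  obtain ⟨c, hc0, hcm⟩ := Q.comm a i
  have hempty : {x : A | ∃ lam : ι, lam < a ∧ lam < i ∧
      (x = Q.elem lam ∨ ∃ mu : ι, lam ≤ mu ∧ x = Q.elem lam * Q.elem mu)} = (∅ : Set A) := by
    ext z
    simp only [Set.mem_setOf_eq, Set.mem_empty_iff_false, iff_false, not_exists]
    rintro lam ⟨hlam, -⟩
    exact hmin lam hlam
  rw [hempty, Submodule.span_empty, Submodule.mem_bot, sub_eq_zero] at hcm
  exact ⟨c, hc0, hcm⟩

lemma regular_of_bot (Q : QuantumGradedASL k A 𝒜 ι) (a : ι) (hbot : ∀ i, a ≤ i)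
    (hmin : ∀ b : ι, ¬ b < a) :
    (∀ y : A, Q.elem a * y = 0 → y = 0) ∧ (∀ y : A, y * Q.elem a = 0 → y = 0) := by
  classical
  choose c hc0 hceq using exact_comm Q hmin
  set g : {l : List ι // l.Chain' (· ≤ ·)} → A :=
    fun l => ((l : List ι).map Q.elem).prod with hg
  have hind : LinearIndependent k g := Q.indep
  have hchain : ∀ l : {l : List ι // l.Chain' (· ≤ ·)}, (a :: (l : List ι)).Chain' (· ≤ ·) :=
    fun l => List.isChain_cons.mpr ⟨fun h _ => hbot h, l.2⟩
  set e : {l : List ι // l.Chain' (· ≤ ·)} → {l : List ι // l.Chain' (· ≤ ·)} :=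
    fun l => ⟨a :: (l : List ι), hchain l⟩ with he
  have einj : Function.Injective e := by
    intro l1 l2 h
    apply Subtype.ext
    have h2 : a :: (l1 : List ι) = a :: (l2 : List ι) := congrArg Subtype.val h
    exact (List.cons.inj h2).2
  have hge : ∀ l, g (e l) = Q.elem a * g l := by
    intro l; simp [hg, he]
  have ind2 : LinearIndependent k (g ∘ e) := hind.comp e einj
  have hswap : ∀ l : List ι, ((l.map Q.elem).prod) * Q.elem a
      = ((l.map fun i => (c i)⁻¹).prod) • (Q.elem a * (l.map Q.elem).prod) := by
    intro l
    induction l with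
    | nil => simp
    | cons i l ih =>
      have h1 : Q.elem i * Q.elem a = (c i)⁻¹ • (Q.elem a * Q.elem i) := by
        rw [hceq, smul_smul, inv_mul_cancel₀ (hc0 i), one_smul]
      simp only [List.map_cons, List.prod_cons]
      calc (Q.elem i * (l.map Q.elem).prod) * Q.elem a
          = Q.elem i * ((l.map Q.elem).prod * Q.elem a) := by rw [mul_assoc]
        _ = Q.elem i * (((l.map fun i => (c i)⁻¹).prod) •
              (Q.elem a * (l.map Q.elem).prod)) := by rw [ih]
        _ = ((l.map fun i => (c i)⁻¹).prod) •
              ((Q.elem i * Q.elem a) * (l.map Q.elem).prod) := by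
            rw [mul_smul_comm, mul_assoc]
        _ = ((c i)⁻¹ * (l.map fun i => (c i)⁻¹).prod) •
              (Q.elem a * (Q.elem i * (l.map Q.elem).prod)) := by
            rw [h1, smul_mul_assoc, smul_smul, mul_assoc, mul_comm ((l.map fun i => (c i)⁻¹).prod)]
  constructor
  · intro y hy0
    obtain ⟨cf, hcf⟩ := Finsupp.mem_span_range_iff_exists_finsupp.mp (mem_stdSpan Q y)
    have h1 : Q.elem a * y = ∑ l ∈ cf.support, cf l • (g ∘ e) l := by
      rw [← hcf, Finsupp.sum, Finset.mul_sum]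
      refine Finset.sum_congr rfl fun l _ => ?_
      rw [Function.comp_apply, hge, mul_smul_comm]
    have hsum : ∑ l ∈ cf.support, cf l • (g ∘ e) l = 0 := by rw [← h1, hy0]
    have hcoef := linearIndependent_iff'.mp ind2 cf.support (fun l => cf l) hsum
    have hcz : cf = 0 := Finsupp.ext fun l => by
      by_cases hl : l ∈ cf.support
      · exact hcoef l hl
      · exact Finsupp.notMem_support_iff.mp hl
    rw [← hcf, hcz, Finsupp.sum_zero_index]
  · intro y hy0
    obtain ⟨cf, hcf⟩ := Finsupp.mem_span_range_iff_exists_finsupp.mp (mem_stdSpan Q y)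
    set d : {l : List ι // l.Chain' (· ≤ ·)} → k :=
      fun l => (((l : List ι)).map fun i => (c i)⁻¹).prod with hd
    have hdne : ∀ l, d l ≠ 0 := by
      intro l
      refine List.prod_ne_zero ?_
      intro h0
      obtain ⟨i, -, hi⟩ := List.mem_map.mp h0
      exact inv_ne_zero (hc0 i) hi
    have h1 : y * Q.elem a = ∑ l ∈ cf.support, (cf l * d l) • (g ∘ e) l := by
      rw [← hcf, Finsupp.sum, Finset.sum_mul]
      refine Finset.sum_congr rfl fun l _ => ?_
      rw [Function.comp_apply, hge, smul_mul_assoc, hswap, smul_smul]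
    have hsum : ∑ l ∈ cf.support, (cf l * d l) • (g ∘ e) l = 0 := by rw [← h1, hy0]
    have hcoef := linearIndependent_iff'.mp ind2 cf.support (fun l => cf l * d l) hsum
    have hcz : cf = 0 := Finsupp.ext fun l => by
      by_cases hl : l ∈ cf.support
      · rcases mul_eq_zero.mp (hcoef l hl) with h | h
        · exact h
        · exact absurd h (hdne l)
      · exact Finsupp.notMem_support_iff.mp hl
    rw [← hcf, hcz, Finsupp.sum_zero_index]

lemma bot_of_unique_min {a : ι} (hmin : ∀ b : ι, ¬ b < a)
    (huniq : ∀ b : ι, (∀ c : ι, ¬ c < b) → b = a) : ∀ i : ι, a ≤ i := by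
  have wf : WellFounded ((· < ·) : ι → ι → Prop) := IsWellFounded.wf
  intro i
  induction i using WellFounded.induction wf with
  | _ x IH =>
    by_cases hx : ∃ j, j < x
    · obtain ⟨j, hj⟩ := hx
      exact le_trans (IH j hj) hj.le
    · exact (huniq x fun c hc => hx ⟨c, hc⟩) ▸ le_refl a
end QASLAux

/-- `x` is a normal element of `A` modulo the subset `I` (intended: a two-sided ideal):
the image of `x` in `A/I` satisfies `x·(A/I) = (A/I)·x`. -/
def IsNormalModSet {A : Type*} [Ring A] (x : A) (I : Set A) : Prop :=
  (∀ a : A, ∃ b : A, x * a - b * x ∈ I) ∧ (∀ a : A, ∃ b : A, a * x - x * b ∈ I)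


open QASLAux in
/-- Let `A` be a quantum graded A.S.L. on the finite poset `(Π, ≤st)` and, for
`a ∈ Π`, let `I_a` be the two-sided ideal generated by `{c ∈ Π : c <st a}`.  Then every `a ∈ Π`
is normal modulo `I_a`; in particular every minimal element of `Π` is normal in `A`.  Moreover,
if `Π` has a unique minimal element `a`, then `a` is a regular normal element of `A`. -/
theorem qasl_normal_elements {k : Type*} [Field k] {A : Type*} [Ring A] [Algebra k A]
    {𝒜 : ℕ → Submodule k A} {ι : Type*} [PartialOrder ι] [Finite ι]
    (Q : QuantumGradedASL k A 𝒜 ι) :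
    (∀ a : ι,
      IsNormalModSet (Q.elem a) (TwoSidedIdeal.span (Q.elem '' {c : ι | c < a}) : Set A)) ∧
    (∀ a : ι, (∀ b : ι, ¬ b < a) → IsNormalModSet (Q.elem a) ({0} : Set A)) ∧
    (∀ a : ι, (∀ b : ι, ¬ b < a) → (∀ b : ι, (∀ c : ι, ¬ c < b) → b = a) →
      IsNormalModSet (Q.elem a) ({0} : Set A) ∧
      (∀ y : A, Q.elem a * y = 0 → y = 0) ∧ (∀ y : A, y * Q.elem a = 0 → y = 0)) := by
  have part2 : ∀ a : ι, (∀ b : ι, ¬ b < a) → IsNormalModSet (Q.elem a) ({0} : Set A) := by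
    intro a hmin
    have h1 : ∀ y : A, ∃ b : A, Q.elem a * y = b * Q.elem a := by
      intro y
      have hy : y ∈ Algebra.adjoin k (Set.range Q.elem) := by rw [Q.gen]; trivial
      induction hy using Algebra.adjoin_induction with
      | mem x hx =>
        obtain ⟨i, rfl⟩ := hx
        obtain ⟨cc, hc0, hcm⟩ := exact_comm Q hmin i
        exact ⟨cc • Q.elem i, by rw [smul_mul_assoc]; exact hcm⟩
      | algebraMap r => exact ⟨algebraMap k A r, (Algebra.commutes r _).symm⟩
      | add x y hx hy ihx ihy =>
        obtain ⟨b1, hb1⟩ := ihx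
        obtain ⟨b2, hb2⟩ := ihy
        exact ⟨b1 + b2, by rw [mul_add, hb1, hb2, add_mul]⟩
      | mul x y hx hy ihx ihy =>
        obtain ⟨b1, hb1⟩ := ihx
        obtain ⟨b2, hb2⟩ := ihy
        exact ⟨b1 * b2, by rw [← mul_assoc, hb1, mul_assoc, hb2, ← mul_assoc]⟩
    have h2 : ∀ y : A, ∃ b : A, y * Q.elem a = Q.elem a * b := by
      intro y
      have hy : y ∈ Algebra.adjoin k (Set.range Q.elem) := by rw [Q.gen]; trivial
      induction hy using Algebra.adjoin_induction with
      | mem x hx =>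
        obtain ⟨i, rfl⟩ := hx
        obtain ⟨cc, hc0, hcm⟩ := exact_comm Q hmin i
        exact ⟨cc⁻¹ • Q.elem i, by
          rw [mul_smul_comm, hcm, smul_smul, inv_mul_cancel₀ hc0, one_smul]⟩
      | algebraMap r => exact ⟨algebraMap k A r, Algebra.commutes r _⟩
      | add x y hx hy ihx ihy =>
        obtain ⟨b1, hb1⟩ := ihx
        obtain ⟨b2, hb2⟩ := ihy
        exact ⟨b1 + b2, by rw [add_mul, hb1, hb2, mul_add]⟩
      | mul x y hx hy ihx ihy =>
        obtain ⟨b1, hb1⟩ := ihx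
        obtain ⟨b2, hb2⟩ := ihy
        exact ⟨b1 * b2, by rw [mul_assoc, hb2, ← mul_assoc, hb1, mul_assoc]⟩
    constructor
    · intro y
      obtain ⟨b, hb⟩ := h1 y
      exact ⟨b, by simp [hb]⟩
    · intro y
      obtain ⟨b, hb⟩ := h2 y
      exact ⟨b, by simp [hb]⟩
  refine ⟨?_, part2, fun a hmin huniq => ⟨part2 a hmin,
    regular_of_bot Q a (bot_of_unique_min hmin huniq) hmin⟩⟩
  intro a
  set I := TwoSidedIdeal.span (Q.elem '' {c : ι | c < a}) with hI
  have hSle : ∀ (b : ι) (z : A), z ∈ Submodule.span k {x : A | ∃ lam : ι, lam < a ∧ lam < b ∧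
      (x = Q.elem lam ∨ ∃ mu : ι, lam ≤ mu ∧ x = Q.elem lam * Q.elem mu)} → z ∈ I := by
    intro b z hz
    induction hz using Submodule.span_induction with
    | mem x hx =>
      obtain ⟨lam, hlam, -, hx | ⟨mu, -, hx⟩⟩ := hx
      · exact hx ▸ TwoSidedIdeal.subset_span ⟨lam, hlam, rfl⟩
      · exact hx ▸ I.mul_mem_right _ _ (TwoSidedIdeal.subset_span ⟨lam, hlam, rfl⟩)
    | zero => exact I.zero_mem
    | add x y hx hy ihx ihy => exact I.add_mem ihx ihy
    | smul r x hx ihx => rw [Algebra.smul_def]; exact I.mul_mem_left _ _ ihx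
  constructor
  · intro y
    have hy : y ∈ Algebra.adjoin k (Set.range Q.elem) := by rw [Q.gen]; trivial
    induction hy using Algebra.adjoin_induction with
    | mem x hx =>
      obtain ⟨i, rfl⟩ := hx
      obtain ⟨cc, hc0, hcm⟩ := Q.comm a i
      exact ⟨cc • Q.elem i, by
        rw [SetLike.mem_coe, smul_mul_assoc]; exact hSle i _ hcm⟩
    | algebraMap r =>
      exact ⟨algebraMap k A r, by
        rw [SetLike.mem_coe, Algebra.commutes r (Q.elem a), sub_self]; exact I.zero_mem⟩
    | add x y hx hy ihx ihy =>
      obtain ⟨b1, hb1⟩ := ihx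
      obtain ⟨b2, hb2⟩ := ihy
      refine ⟨b1 + b2, ?_⟩
      have heq : Q.elem a * (x + y) - (b1 + b2) * Q.elem a =
          (Q.elem a * x - b1 * Q.elem a) + (Q.elem a * y - b2 * Q.elem a) := by noncomm_ring
      rw [SetLike.mem_coe, heq]
      exact I.add_mem hb1 hb2
    | mul x y hx hy ihx ihy =>
      obtain ⟨b1, hb1⟩ := ihx
      obtain ⟨b2, hb2⟩ := ihy
      refine ⟨b1 * b2, ?_⟩
      have heq : Q.elem a * (x * y) - (b1 * b2) * Q.elem a =
          (Q.elem a * x - b1 * Q.elem a) * y + b1 * (Q.elem a * y - b2 * Q.elem a) := by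
        noncomm_ring
      rw [SetLike.mem_coe, heq]
      exact I.add_mem (I.mul_mem_right _ _ hb1) (I.mul_mem_left _ _ hb2)
  · intro y
    have hy : y ∈ Algebra.adjoin k (Set.range Q.elem) := by rw [Q.gen]; trivial
    induction hy using Algebra.adjoin_induction with
    | mem x hx =>
      obtain ⟨i, rfl⟩ := hx
      obtain ⟨cc, hc0, hcm⟩ := Q.comm a i
      refine ⟨cc⁻¹ • Q.elem i, ?_⟩
      have h2 : Q.elem a * (cc⁻¹ • Q.elem i) = cc⁻¹ • (Q.elem a * Q.elem i) :=
        mul_smul_comm _ _ _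
      have key : Q.elem i * Q.elem a - Q.elem a * (cc⁻¹ • Q.elem i)
          = (-cc⁻¹) • (Q.elem a * Q.elem i - cc • (Q.elem i * Q.elem a)) := by
        rw [h2, smul_sub, smul_smul, neg_mul, inv_mul_cancel₀ hc0, neg_smul, neg_smul,
          one_smul, sub_neg_eq_add, sub_eq_neg_add]
      rw [SetLike.mem_coe, key, Algebra.smul_def]
      exact I.mul_mem_left _ _ (hSle i _ hcm)
    | algebraMap r =>
      exact ⟨algebraMap k A r, by
        rw [SetLike.mem_coe, ← Algebra.commutes r (Q.elem a), sub_self]; exact I.zero_mem⟩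
    | add x y hx hy ihx ihy =>
      obtain ⟨b1, hb1⟩ := ihx
      obtain ⟨b2, hb2⟩ := ihy
      refine ⟨b1 + b2, ?_⟩
      have heq : (x + y) * Q.elem a - Q.elem a * (b1 + b2) =
          (x * Q.elem a - Q.elem a * b1) + (y * Q.elem a - Q.elem a * b2) := by noncomm_ring
      rw [SetLike.mem_coe, heq]
      exact I.add_mem hb1 hb2
    | mul x y hx hy ihx ihy =>
      obtain ⟨b1, hb1⟩ := ihx
      obtain ⟨b2, hb2⟩ := ihy
      refine ⟨b1 * b2, ?_⟩
      have heq : (x * y) * Q.elem a - Q.elem a * (b1 * b2) =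
          x * (y * Q.elem a - Q.elem a * b2) + (x * Q.elem a - Q.elem a * b1) * b2 := by
        noncomm_ring
      rw [SetLike.mem_coe, heq]
      exact I.add_mem (I.mul_mem_left _ _ hb2) (I.mul_mem_right _ _ hb1)
end

section
/- Let k be a field, let A be a quantum graded algebra with a straightening law on a finite poset (Π, ≤st), let Ω be a Π-ideal, and let <tot be any total order on Π which respects ≤st (i.e. α <st β implies α <tot β). Then the elements of Ω, listed in increasing order with respect to <tot, form a normalising sequence of generators of the two-sided ideal ⟨Ω⟩ of A generated by Ω. -/
/-- Let `A` be a quantum graded A.S.L. on the finite poset `(Π, ≤st)`, let `Ω`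
be a `Π`-ideal (a lower set) and let `<tot` (here `r`) be any strict total order on `Π` which
respects `≤st`.  If `l` enumerates `Ω` in increasing `<tot`-order, then `l` is a normalising
sequence of generators of the two-sided ideal `⟨Ω⟩`: each entry is normal modulo the two-sided
ideal generated by the previous entries, and the entries generate `⟨Ω⟩`. -/
theorem qasl_pi_ideal_normalising_sequence {k : Type*} [Field k] {A : Type*} [Ring A]
    [Algebra k A] {𝒜 : ℕ → Submodule k A} {ι : Type*} [PartialOrder ι] [Finite ι]
    (Q : QuantumGradedASL k A 𝒜 ι)
    (Ω : Set ι) (hΩ : IsLowerSet Ω)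
    (r : ι → ι → Prop) (hr : IsStrictTotalOrder ι r) (hresp : ∀ a b : ι, a < b → r a b)
    (l : List ι) (hnodup : l.Nodup) (henum : ∀ a : ι, a ∈ l ↔ a ∈ Ω)
    (hsorted : l.Chain' r) :
    TwoSidedIdeal.span (Q.elem '' Ω)
        = TwoSidedIdeal.span {x : A | ∃ a ∈ l, x = Q.elem a} ∧
    ∀ (i : ℕ) (h : i < l.length),
      IsNormalModSet (Q.elem (l.get ⟨i, h⟩))
        (TwoSidedIdeal.span {x : A | ∃ a ∈ l.take i, x = Q.elem a} : Set A) := by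
  constructor
  · congr 1
    ext x
    simp only [Set.mem_image, Set.mem_setOf_eq]
    constructor
    · rintro ⟨a, ha, rfl⟩; exact ⟨a, (henum a).2 ha, rfl⟩
    · rintro ⟨a, ha, rfl⟩; exact ⟨a, (henum a).1 ha, rfl⟩
  · intro i h
    set x := Q.elem (l.get ⟨i, h⟩) with hx
    set I := TwoSidedIdeal.span {y : A | ∃ a ∈ l.take i, y = Q.elem a} with hI
    have hIsmul : ∀ (c : k) (y : A), y ∈ I → c • y ∈ I := by
      intro c y hy
      rw [Algebra.smul_def]
      exact I.mul_mem_left _ _ hy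
    haveI : IsTrans ι r := ⟨hr.trans⟩
    have hpw : l.Pairwise r := List.isChain_iff_pairwise.mp hsorted
    -- every lam < α has elem lam ∈ I
    have hmemI : ∀ lam : ι, lam < l.get ⟨i, h⟩ → Q.elem lam ∈ I := by
      intro lam hlam
      have hαΩ : l.get ⟨i, h⟩ ∈ Ω := (henum _).1 (l.get_mem _)
      have hlaml : lam ∈ l := (henum lam).2 (hΩ hlam.le hαΩ)
      obtain ⟨j, hj, hjl⟩ := List.mem_iff_getElem.mp hlaml
      have hrlamα : r lam (l.get ⟨i, h⟩) := hresp _ _ hlam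
      have hji : j < i := by
        by_contra hji
        push_neg at hji
        rcases lt_or_eq_of_le hji with hlt | heq
        · have := List.pairwise_iff_getElem.mp hpw i j h hj hlt
          rw [hjl] at this
          exact hr.irrefl lam (hr.trans _ _ _ hrlamα (by simpa using this))
        · subst heq
          have : lam = l.get ⟨i, h⟩ := by simpa [List.get_eq_getElem] using hjl.symm
          rw [this] at hrlamα
          exact hr.irrefl _ hrlamα
      apply TwoSidedIdeal.subset_span
      refine ⟨lam, ?_, rfl⟩
      rw [← hjl]
      rw [List.mem_take_iff_getElem]
      exact ⟨j, by omega, by simp⟩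
    -- the straightening span lands in I
    have hspan : ∀ β : ι,
        (Submodule.span k {y : A | ∃ lam : ι, lam < l.get ⟨i, h⟩ ∧ lam < β ∧
          (y = Q.elem lam ∨ ∃ mu : ι, lam ≤ mu ∧ y = Q.elem lam * Q.elem mu)} : Set A)
          ⊆ (I : Set A) := by
      intro β
      let I' : Submodule k A :=
        { carrier := (I : Set A)
          add_mem' := fun ha hb => I.add_mem ha hb
          zero_mem' := I.zero_mem
          smul_mem' := fun c y hy => hIsmul c y hy }
      have : Submodule.span k {y : A | ∃ lam : ι, lam < l.get ⟨i, h⟩ ∧ lam < β ∧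
          (y = Q.elem lam ∨ ∃ mu : ι, lam ≤ mu ∧ y = Q.elem lam * Q.elem mu)} ≤ I' := by
        rw [Submodule.span_le]
        rintro y ⟨lam, hlam, _, (rfl | ⟨mu, _, rfl⟩)⟩
        · exact hmemI lam hlam
        · exact I.mul_mem_right _ _ (hmemI lam hlam)
      exact fun y hy => this hy
    have key : ∀ β : ι, ∃ c : k, c ≠ 0 ∧
        x * Q.elem β - c • (Q.elem β * x) ∈ I := by
      intro β
      obtain ⟨c, hc, hmem⟩ := Q.comm (l.get ⟨i, h⟩) β
      exact ⟨c, hc, hspan β hmem⟩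
    have hadj : ∀ a : A, a ∈ Algebra.adjoin k (Set.range Q.elem) := by
      intro a; rw [Q.gen]; exact Algebra.mem_top
    constructor
    · intro a
      refine Algebra.adjoin_induction (p := fun a _ => ∃ b : A, x * a - b * x ∈ (I : Set A))
        ?_ ?_ ?_ ?_ (hadj a)
      · rintro _ ⟨β, rfl⟩
        obtain ⟨c, _, hmem⟩ := key β
        exact ⟨c • Q.elem β, by rwa [smul_mul_assoc]⟩
      · intro s
        exact ⟨algebraMap k A s, by rw [Algebra.commutes, sub_self]; exact I.zero_mem⟩
      · rintro a₁ a₂ _ _ ⟨b₁, hb₁⟩ ⟨b₂, hb₂⟩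
        refine ⟨b₁ + b₂, ?_⟩
        have := I.add_mem hb₁ hb₂
        rwa [show x * a₁ - b₁ * x + (x * a₂ - b₂ * x) = x * (a₁ + a₂) - (b₁ + b₂) * x by
          noncomm_ring] at this
      · rintro a₁ a₂ _ _ ⟨b₁, hb₁⟩ ⟨b₂, hb₂⟩
        refine ⟨b₁ * b₂, ?_⟩
        have := I.add_mem (I.mul_mem_right _ a₂ hb₁) (I.mul_mem_left b₁ _ hb₂)
        rwa [show (x * a₁ - b₁ * x) * a₂ + b₁ * (x * a₂ - b₂ * x)
            = x * (a₁ * a₂) - b₁ * b₂ * x by noncomm_ring] at this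
    · intro a
      refine Algebra.adjoin_induction (p := fun a _ => ∃ b : A, a * x - x * b ∈ (I : Set A))
        ?_ ?_ ?_ ?_ (hadj a)
      · rintro _ ⟨β, rfl⟩
        obtain ⟨c, hc, hmem⟩ := key β
        refine ⟨c⁻¹ • Q.elem β, ?_⟩
        have heq : Q.elem β * x - x * (c⁻¹ • Q.elem β)
            = (-c⁻¹) • (x * Q.elem β - c • (Q.elem β * x)) := by
          rw [smul_sub, smul_smul, neg_mul, inv_mul_cancel₀ hc, mul_smul_comm, neg_smul,
            neg_smul, one_smul, sub_neg_eq_add]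
          abel
        rw [heq]
        exact hIsmul _ _ hmem
      · intro s
        exact ⟨algebraMap k A s, by rw [Algebra.commutes, sub_self]; exact I.zero_mem⟩
      · rintro a₁ a₂ _ _ ⟨b₁, hb₁⟩ ⟨b₂, hb₂⟩
        refine ⟨b₁ + b₂, ?_⟩
        have := I.add_mem hb₁ hb₂
        rwa [show a₁ * x - x * b₁ + (a₂ * x - x * b₂) = (a₁ + a₂) * x - x * (b₁ + b₂) by
          noncomm_ring] at this
      · rintro a₁ a₂ _ _ ⟨b₁, hb₁⟩ ⟨b₂, hb₂⟩
        refine ⟨b₁ * b₂, ?_⟩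
        have := I.add_mem (I.mul_mem_left a₁ _ hb₂) (I.mul_mem_right _ b₂ hb₁)
        rwa [show a₁ * (a₂ * x - x * b₂) + (a₁ * x - x * b₁) * b₂
            = a₁ * a₂ * x - x * (b₁ * b₂) by noncomm_ring] at this
end

section
/- Let k be a field, let A be a quantum graded algebra with a straightening law on a finite poset (Π, ≤st), and let Ω be a Π-ideal. Then the set of standard monomials which involve an element of Ω (i.e. standard monomials α₁⋯α_s with α₁ ≤st ⋯ ≤st α_s such that some αᵢ ∈ Ω) forms a k-vector space basis of the two-sided ideal ⟨Ω⟩ of A generated by Ω. -/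
namespace QaslAux

variable {k : Type*} [Field k] {A : Type*} [Ring A] [Algebra k A]
    {𝒜 : ℕ → Submodule k A} {ι : Type*} [PartialOrder ι] [Finite ι]

lemma homog_span_proj [GradedAlgebra 𝒜] {S : Set A} (hS : ∀ s ∈ S, ∃ d, s ∈ 𝒜 d)
    {x : A} (hx : x ∈ Submodule.span k S) {e : ℕ} (hxe : x ∈ 𝒜 e) :
    x ∈ Submodule.span k (S ∩ (𝒜 e : Set A)) := by
  have hπ : ∀ y ∈ Submodule.span k S,
      ((DirectSum.decompose 𝒜 y e : 𝒜 e) : A) ∈ Submodule.span k (S ∩ (𝒜 e : Set A)) := by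
    intro y hy
    induction hy using Submodule.span_induction with
    | mem s hs =>
      obtain ⟨d, hd⟩ := hS s hs
      by_cases hde : d = e
      · rw [DirectSum.decompose_of_mem_same 𝒜 (hde ▸ hd)]
        exact Submodule.subset_span ⟨hs, hde ▸ hd⟩
      · rw [DirectSum.decompose_of_mem_ne 𝒜 hd hde]
        exact Submodule.zero_mem _
    | zero => simp
    | add a b _ _ ha hb =>
      rw [DirectSum.decompose_add, DirectSum.add_apply, Submodule.coe_add]
      exact Submodule.add_mem _ ha hb
    | smul r a _ ha =>
      rw [DirectSum.decompose_smul, DirectSum.smul_apply, Submodule.coe_smul]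
      exact Submodule.smul_mem _ _ ha
  have h := hπ x hx
  rwa [DirectSum.decompose_of_mem_same 𝒜 hxe] at h

lemma mem_ne_zero [GradedAlgebra 𝒜] {x : A} {i j : ℕ} (hi : x ∈ 𝒜 i) (hj : x ∈ 𝒜 j)
    (hij : i ≠ j) : x = 0 := by
  have h1 := DirectSum.decompose_of_mem_same 𝒜 hi
  have h2 := DirectSum.decompose_of_mem_ne 𝒜 hj (Ne.symm hij)
  rw [h2] at h1
  exact h1.symm

lemma rk_lt {α β : ι} (h : β < α) : (Set.Iio β).ncard < (Set.Iio α).ncard := by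
  apply Set.ncard_lt_ncard _ (Set.toFinite _)
  constructor
  · exact fun x hx => lt_trans hx h
  · intro hsub
    exact lt_irrefl β (hsub h)

lemma span_mul_right {S : Set A} {x : A} (hx : x ∈ Submodule.span k S) (z : A)
    (T : Submodule k A) (h : ∀ s ∈ S, s * z ∈ T) : x * z ∈ T := by
  induction hx using Submodule.span_induction with
  | mem s hs => exact h s hs
  | zero => rw [zero_mul]; exact T.zero_mem
  | add a b _ _ ha hb => rw [add_mul]; exact T.add_mem ha hb
  | smul r a _ ha => rw [smul_mul_assoc]; exact T.smul_mem r ha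

lemma span_mul_left {S : Set A} {x : A} (hx : x ∈ Submodule.span k S) (z : A)
    (T : Submodule k A) (h : ∀ s ∈ S, z * s ∈ T) : z * x ∈ T := by
  induction hx using Submodule.span_induction with
  | mem s hs => exact h s hs
  | zero => rw [mul_zero]; exact T.zero_mem
  | add a b _ _ ha hb => rw [mul_add]; exact T.add_mem ha hb
  | smul r a _ ha => rw [mul_smul_comm]; exact T.smul_mem r ha

variable (Q : QuantumGradedASL k A 𝒜 ι)

/-- a chosen degree for each generator -/
noncomputable def deg (i : ι) : ℕ := (Q.homog i).choose

lemma deg_pos (i : ι) : 0 < deg Q i := (Q.homog i).choose_spec.1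

lemma elem_mem_deg (i : ι) : Q.elem i ∈ 𝒜 (deg Q i) := (Q.homog i).choose_spec.2

/-- degree of a word -/
noncomputable def degL (l : List ι) : ℕ := (l.map (deg Q)).sum

@[simp] lemma degL_nil : degL Q ([] : List ι) = 0 := rfl

@[simp] lemma degL_cons (a : ι) (l : List ι) : degL Q (a :: l) = deg Q a + degL Q l := by
  simp [degL]

lemma prod_mem_graded (l : List ι) : (l.map Q.elem).prod ∈ 𝒜 (degL Q l) := by
  haveI := Q.graded
  induction l with
  | nil => simpa [degL] using SetLike.GradedOne.one_mem
  | cons a l ih =>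
    rw [List.map_cons, List.prod_cons, degL_cons]
    exact SetLike.mul_mem_graded (elem_mem_deg Q a) ih

/-- standard monomials of degree `d`, containing an element of `Ω` provided `p` holds -/
def SMset (Ω : Set ι) (d : ℕ) (p : Prop) : Set A :=
  {x | ∃ l : List ι, l.Chain' (· ≤ ·) ∧ degL Q l = d ∧ (p → ∃ a ∈ l, a ∈ Ω) ∧
    x = (l.map Q.elem).prod}

lemma SMset_mono {Ω : Set ι} {d : ℕ} {p q : Prop} (hpq : q → p) :
    SMset Q Ω d p ⊆ SMset Q Ω d q := by
  rintro x ⟨l, h1, h2, h3, h4⟩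
  exact ⟨l, h1, h2, fun hq => h3 (hpq hq), h4⟩

/-- the straightening relation set -/
def RelSet (a b : ι) : Set A :=
  {x : A | ∃ lam : ι, lam < a ∧ lam < b ∧
    (x = Q.elem lam ∨ ∃ mu : ι, lam ≤ mu ∧ x = Q.elem lam * Q.elem mu)}

lemma RelSet_homog : ∀ s ∈ RelSet Q a b, ∃ d, s ∈ 𝒜 d := by
  rintro s ⟨lam, _, _, (rfl | ⟨mu, _, rfl⟩)⟩
  · exact ⟨deg Q lam, elem_mem_deg Q lam⟩
  · haveI := Q.graded
    exact ⟨deg Q lam + deg Q mu, SetLike.mul_mem_graded (elem_mem_deg Q lam) (elem_mem_deg Q mu)⟩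


lemma key (Ω : Set ι) (hΩ : IsLowerSet Ω) :
    ∀ n rkb : ℕ, ∀ α : ι, ∀ m : List ι, m.Chain' (· ≤ ·) →
      deg Q α + degL Q m = n → (Set.Iio α).ncard = rkb →
      Q.elem α * (m.map Q.elem).prod ∈
        Submodule.span k (SMset Q Ω n (∃ a ∈ α :: m, a ∈ Ω)) := by
  haveI := Q.graded
  intro n
  induction n using Nat.strong_induction_on with
  | _ n ihn =>
  intro rkb
  induction rkb using Nat.strong_induction_on with
  | _ rkb ihr =>
  intro α m hm hdeg hrk
  cases m with
  | nil =>
    apply Submodule.subset_span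
    exact ⟨[α], List.isChain_singleton α, by simpa using hdeg, fun h => h, by simp⟩
  | cons β m' =>
    have hm' : m'.Chain' (· ≤ ·) := hm.tail
    simp only [degL_cons] at hdeg
    set e := deg Q α + deg Q β with he
    set P : Prop := ∃ a ∈ α :: β :: m', a ∈ Ω with hP
    set T := Submodule.span k (SMset Q Ω n P) with hT
    have hmemαβ : Q.elem α * Q.elem β ∈ 𝒜 e := by
      rw [he]; exact SetLike.mul_mem_graded (elem_mem_deg Q α) (elem_mem_deg Q β)
    have hmemβα : Q.elem β * Q.elem α ∈ 𝒜 e := by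
      rw [he, add_comm]
      exact SetLike.mul_mem_graded (elem_mem_deg Q β) (elem_mem_deg Q α)
    -- handling of the straightening relation terms
    have hrel : ∀ y ∈ RelSet Q α β ∩ (𝒜 e : Set A),
        y * (m'.map Q.elem).prod ∈ T := by
      rintro y ⟨⟨lam, hla, hlb, hy⟩, hye⟩
      rcases hy with rfl | ⟨mu, hlm, rfl⟩
      · -- y = elem lam
        by_cases hd : deg Q lam = e
        · have hcall := ihr _ (by rw [← hrk]; exact rk_lt hla) lam m' hm'
            (by rw [hd, he]; omega) rfl
          refine Submodule.span_mono (SMset_mono Q ?_) hcall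
          rintro ⟨a, ha, haΩ⟩
          rcases List.mem_cons.mp ha with rfl | ha'
          · exact ⟨lam, List.mem_cons_self, hΩ hla.le haΩ⟩
          · rcases List.mem_cons.mp ha' with rfl | ha''
            · exact ⟨lam, List.mem_cons_self, hΩ hlb.le haΩ⟩
            · exact ⟨a, List.mem_cons_of_mem _ ha'', haΩ⟩
        · have h0 : Q.elem lam = 0 := mem_ne_zero (elem_mem_deg Q lam) hye hd
          rw [h0, zero_mul]
          exact Submodule.zero_mem _
      · -- y = elem lam * elem mu
        by_cases hd : deg Q lam + deg Q mu = e
        · have hlt : deg Q mu + degL Q m' < n := by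
            have := deg_pos Q lam; rw [he] at hd; omega
          have h1 := ihn _ hlt (Set.Iio mu).ncard mu m' hm' rfl rfl
          rw [mul_assoc]
          apply span_mul_left h1
          rintro s ⟨l, hl1, hl2, hl3, rfl⟩
          have hcall := ihr _ (by rw [← hrk]; exact rk_lt hla) lam l hl1
            (by rw [hl2, he] at *; omega) rfl
          refine Submodule.span_mono (SMset_mono Q ?_) hcall
          rintro ⟨a, ha, haΩ⟩
          rcases List.mem_cons.mp ha with rfl | ha'
          · exact ⟨lam, List.mem_cons_self, hΩ hla.le haΩ⟩
          · rcases List.mem_cons.mp ha' with rfl | ha''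
            · exact ⟨lam, List.mem_cons_self, hΩ hlb.le haΩ⟩
            · obtain ⟨b, hb, hbΩ⟩ := hl3 ⟨a, List.mem_cons_of_mem _ ha'', haΩ⟩
              exact ⟨b, List.mem_cons_of_mem _ hb, hbΩ⟩
        · have h0 : Q.elem lam * Q.elem mu = 0 :=
            mem_ne_zero (SetLike.mul_mem_graded (elem_mem_deg Q lam) (elem_mem_deg Q mu)) hye hd
          rw [h0, zero_mul]
          exact Submodule.zero_mem _
    by_cases hab : α ≤ β
    · apply Submodule.subset_span
      refine ⟨α :: β :: m', List.isChain_cons_cons.mpr ⟨hab, hm⟩, by simp; omega, fun h => h, by simp⟩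
    · by_cases hba : β ≤ α
      · have hblt : β < α := lt_of_le_of_ne hba (fun h => hab (le_of_eq h.symm))
        obtain ⟨c, hc0, hc⟩ := Q.comm α β
        have hy0e : Q.elem α * Q.elem β - c • (Q.elem β * Q.elem α) ∈ 𝒜 e :=
          Submodule.sub_mem _ hmemαβ (Submodule.smul_mem _ _ hmemβα)
        have hy0 := homog_span_proj (RelSet_homog Q) hc hy0e
        have hterm1 : (Q.elem α * Q.elem β - c • (Q.elem β * Q.elem α)) * (m'.map Q.elem).prod
            ∈ T := span_mul_right hy0 _ _ hrel
        have hlt2 : deg Q α + degL Q m' < n := by have := deg_pos Q β; omega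
        have h2 := ihn _ hlt2 (Set.Iio α).ncard α m' hm' rfl rfl
        have hterm2 : Q.elem β * (Q.elem α * (m'.map Q.elem).prod) ∈ T := by
          apply span_mul_left h2
          rintro s ⟨l, hl1, hl2, hl3, rfl⟩
          have hcall := ihr _ (by rw [← hrk]; exact rk_lt hblt) β l hl1
            (by rw [hl2]; omega) rfl
          refine Submodule.span_mono (SMset_mono Q ?_) hcall
          rintro ⟨a, ha, haΩ⟩
          rcases List.mem_cons.mp ha with rfl | ha'
          · obtain ⟨b, hb, hbΩ⟩ := hl3 ⟨a, List.mem_cons_self, haΩ⟩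
            exact ⟨b, List.mem_cons_of_mem _ hb, hbΩ⟩
          · rcases List.mem_cons.mp ha' with rfl | ha''
            · exact ⟨a, List.mem_cons_self, haΩ⟩
            · obtain ⟨b, hb, hbΩ⟩ := hl3 ⟨a, List.mem_cons_of_mem _ ha'', haΩ⟩
              exact ⟨b, List.mem_cons_of_mem _ hb, hbΩ⟩
        have heq : Q.elem α * ((β :: m').map Q.elem).prod
            = (Q.elem α * Q.elem β - c • (Q.elem β * Q.elem α)) * (m'.map Q.elem).prod
              + c • (Q.elem β * (Q.elem α * (m'.map Q.elem).prod)) := by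
          simp [sub_mul, smul_mul_assoc, mul_assoc]
        rw [heq]
        exact Submodule.add_mem _ hterm1 (Submodule.smul_mem _ _ hterm2)
      · have h4 := Q.straighten α β hab hba
        have h4' := homog_span_proj (RelSet_homog Q) h4 hmemαβ
        rw [List.map_cons, List.prod_cons, ← mul_assoc]
        exact span_mul_right h4' _ _ hrel


lemma word (Ω : Set ι) (hΩ : IsLowerSet Ω) (w : List ι) :
    (w.map Q.elem).prod ∈
      Submodule.span k (SMset Q Ω (degL Q w) (∃ a ∈ w, a ∈ Ω)) := by
  induction w with
  | nil =>
    apply Submodule.subset_span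
    exact ⟨[], List.isChain_nil, rfl, fun h => h, by simp⟩
  | cons a w ih =>
    rw [List.map_cons, List.prod_cons]
    apply span_mul_left ih
    rintro s ⟨l, hl1, hl2, hl3, rfl⟩
    have hcall := key Q Ω hΩ (deg Q a + degL Q l) (Set.Iio a).ncard a l hl1 rfl rfl
    have hdeq : deg Q a + degL Q l = degL Q (a :: w) := by rw [hl2, degL_cons]
    rw [hdeq] at hcall
    refine Submodule.span_mono (SMset_mono Q ?_) hcall
    rintro ⟨b, hb, hbΩ⟩
    rcases List.mem_cons.mp hb with rfl | hb'
    · exact ⟨b, List.mem_cons_self, hbΩ⟩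
    · obtain ⟨d, hd, hdΩ⟩ := hl3 ⟨b, hb', hbΩ⟩
      exact ⟨d, List.mem_cons_of_mem _ hd, hdΩ⟩

lemma top_span (x : A) :
    x ∈ Submodule.span k {y : A | ∃ w : List ι, y = (w.map Q.elem).prod} := by
  have hx : x ∈ Algebra.adjoin k (Set.range Q.elem) := by rw [Q.gen]; trivial
  rw [← Subalgebra.mem_toSubmodule, Algebra.adjoin_eq_span] at hx
  refine Submodule.span_mono ?_ hx
  intro y hy
  obtain ⟨l, hl, rfl⟩ := Submonoid.exists_list_of_mem_closure hy
  clear hy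
  induction l with
  | nil => exact ⟨[], by simp⟩
  | cons z l ih =>
    obtain ⟨i, hi⟩ := hl z (List.mem_cons_self)
    obtain ⟨w, hw⟩ := ih (fun y hy => hl y (List.mem_cons_of_mem _ hy))
    exact ⟨i :: w, by simp [← hi, hw]⟩

end QaslAux

set_option maxHeartbeats 1000000 in
/-- Let `A` be a quantum graded A.S.L. on the finite poset `(Π, ≤st)` and let
`Ω` be a `Π`-ideal.  The standard monomials which involve an element of `Ω` form a `k`-vector
space basis of the two-sided ideal `⟨Ω⟩` of `A` generated by `Ω`: they are linearly independent
and their `k`-linear span is exactly `⟨Ω⟩`. -/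
theorem qasl_pi_ideal_standard_basis {k : Type*} [Field k] {A : Type*} [Ring A] [Algebra k A]
    {𝒜 : ℕ → Submodule k A} {ι : Type*} [PartialOrder ι] [Finite ι]
    (Q : QuantumGradedASL k A 𝒜 ι) (Ω : Set ι) (hΩ : IsLowerSet Ω) :
    LinearIndependent k
      (fun l : {l : List ι // l.Chain' (· ≤ ·) ∧ ∃ a ∈ l, a ∈ Ω} =>
        ((l : List ι).map Q.elem).prod) ∧
    (Submodule.span k
        (Set.range (fun l : {l : List ι // l.Chain' (· ≤ ·) ∧ ∃ a ∈ l, a ∈ Ω} =>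
          ((l : List ι).map Q.elem).prod)) : Set A)
      = (TwoSidedIdeal.span (Q.elem '' Ω) : Set A) := by
  classical
  constructor
  · exact Q.indep.comp
      (fun l : {l : List ι // l.Chain' (· ≤ ·) ∧ ∃ a ∈ l, a ∈ Ω} =>
        (⟨l.1, l.2.1⟩ : {l : List ι // l.Chain' (· ≤ ·)}))
      (fun x y hxy => Subtype.ext (by simpa using congrArg Subtype.val hxy))
  · set fam := fun l : {l : List ι // l.Chain' (· ≤ ·) ∧ ∃ a ∈ l, a ∈ Ω} =>
      ((l : List ι).map Q.elem).prod with hfam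
    set V := Submodule.span k (Set.range fam) with hV
    have hgen : ∀ l : List ι, l.Chain' (· ≤ ·) → (∃ a ∈ l, a ∈ Ω) →
        (l.map Q.elem).prod ∈ V := fun l h1 h2 =>
      Submodule.subset_span ⟨⟨l, h1, h2⟩, rfl⟩
    -- V absorbs multiplication on both sides
    have habs : ∀ y ∈ V, ∀ x : A, x * y ∈ V ∧ y * x ∈ V := by
      intro y hy
      induction hy using Submodule.span_induction with
      | mem s hs =>
        obtain ⟨⟨l, hl1, hl2⟩, rfl⟩ := hs
        intro x
        have hsub : ∀ w : List ι, (∃ a ∈ w, a ∈ Ω) → (w.map Q.elem).prod ∈ V := by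
          intro w hw
          have hword := QaslAux.word Q Ω hΩ w
          refine Submodule.span_le.mpr ?_ hword
          rintro s ⟨l', hc1, _, hc3, rfl⟩
          exact hgen l' hc1 (hc3 hw)
        constructor
        · apply QaslAux.span_mul_right (QaslAux.top_span Q x)
          rintro s ⟨w, rfl⟩
          have heq : (w.map Q.elem).prod * ((l : List ι).map Q.elem).prod
              = ((w ++ (l : List ι)).map Q.elem).prod := by
            rw [List.map_append, List.prod_append]
          rw [heq]
          obtain ⟨a, ha, haΩ⟩ := hl2
          exact hsub _ ⟨a, List.mem_append_right _ ha, haΩ⟩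
        · apply QaslAux.span_mul_left (QaslAux.top_span Q x)
          rintro s ⟨w, rfl⟩
          have heq : ((l : List ι).map Q.elem).prod * (w.map Q.elem).prod
              = (((l : List ι) ++ w).map Q.elem).prod := by
            rw [List.map_append, List.prod_append]
          rw [heq]
          obtain ⟨a, ha, haΩ⟩ := hl2
          exact hsub _ ⟨a, List.mem_append_left _ ha, haΩ⟩
      | zero => intro x; simp
      | add a b _ _ ha hb =>
        intro x
        exact ⟨by rw [mul_add]; exact V.add_mem (ha x).1 (hb x).1,
               by rw [add_mul]; exact V.add_mem (ha x).2 (hb x).2⟩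
      | smul r a _ ha =>
        intro x
        exact ⟨by rw [mul_smul_comm]; exact V.smul_mem r (ha x).1,
               by rw [smul_mul_assoc]; exact V.smul_mem r (ha x).2⟩
    apply Set.Subset.antisymm
    · -- span of Ω-standard monomials ⊆ two-sided ideal
      intro z hz
      rw [SetLike.mem_coe] at hz ⊢
      induction hz using Submodule.span_induction with
      | mem s hs =>
        obtain ⟨⟨l, hl1, a, hal, haΩ⟩, rfl⟩ := hs
        obtain ⟨s', t', rfl⟩ := List.append_of_mem hal
        show ((s' ++ a :: t').map Q.elem).prod ∈ _
        rw [List.map_append, List.prod_append, List.map_cons, List.prod_cons, ← mul_assoc]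
        apply TwoSidedIdeal.mul_mem_right
        apply TwoSidedIdeal.mul_mem_left
        exact TwoSidedIdeal.subset_span ⟨a, haΩ, rfl⟩
      | zero => exact TwoSidedIdeal.zero_mem _
      | add a b _ _ ha hb => exact TwoSidedIdeal.add_mem _ ha hb
      | smul r a _ ha =>
        rw [Algebra.smul_def]
        exact TwoSidedIdeal.mul_mem_left _ _ _ ha
    · -- two-sided ideal ⊆ span
      intro z hz
      rw [SetLike.mem_coe] at hz ⊢
      let J : TwoSidedIdeal A := TwoSidedIdeal.mk' (V : Set A)
        V.zero_mem (fun ha hb => V.add_mem ha hb) (fun ha => V.neg_mem ha)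
        (fun {x y} hy => (habs y hy x).1) (fun {x y} hx => (habs x hx y).2)
      have hJ : z ∈ J := by
        refine TwoSidedIdeal.mem_span_iff.mp hz J ?_
        rintro _ ⟨a, haΩ, rfl⟩
        rw [SetLike.mem_coe, TwoSidedIdeal.mem_mk']
        have := hgen [a] (List.isChain_singleton a) ⟨a, List.mem_cons_self, haΩ⟩
        simpa using this
      rwa [TwoSidedIdeal.mem_mk'] at hJ
end

section
/- Let k be a field, let A be a quantum graded algebra with a straightening law on a finite poset (Π, ≤st), let Ω be a Π-ideal, and let p : A → A/⟨Ω⟩ be the canonical projection onto the quotient by the two-sided ideal generated by Ω. Then A/⟨Ω⟩ is a quantum graded algebra with a straightening law on the poset p(Π∖Ω), with the partial order inherited from (Π, ≤st) via the bijection Π∖Ω ≅ p(Π∖Ω). -/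
namespace QASLAux

open Submodule List

variable {k : Type*} [Field k] {A : Type*} [Ring A] [Algebra k A]
  {𝒜 : ℕ → Submodule k A} {ι : Type*} [PartialOrder ι] [Finite ι]

variable (Q : QuantumGradedASL k A 𝒜 ι) (Ω : Set ι)

def mono (l : List ι) : A := (l.map Q.elem).prod

lemma mono_nil : mono Q ([] : List ι) = 1 := rfl

lemma mono_cons (b : ι) (t : List ι) : mono Q (b :: t) = Q.elem b * mono Q t := by
  simp [mono]

def Tset (a : ι) (n : ℕ) (ω : Prop) : Set A :=
  {x | ∃ b t, (b :: t).Chain' (· ≤ ·) ∧ t.length ≤ n ∧ b ≤ a ∧ (ω → b ∈ Ω) ∧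
    x = mono Q (b :: t)}

lemma Tset_mono {a a' : ι} {n n' : ℕ} {ω ω' : Prop} (ha : a ≤ a') (hn : n ≤ n')
    (hω : ω' → ω) : Tset Q Ω a n ω ⊆ Tset Q Ω a' n' ω' := by
  rintro x ⟨b, t, h1, h2, h3, h4, h5⟩
  exact ⟨b, t, h1, h2.trans hn, h3.trans ha, fun h => h4 (hω h), h5⟩

lemma mul_left_span {S T : Set A} (y : A) (h : ∀ s ∈ S, y * s ∈ span k T) :
    ∀ x ∈ span k S, y * x ∈ span k T := by
  intro x hx
  induction hx using Submodule.span_induction with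
  | mem s hs => exact h s hs
  | zero => simp
  | add a b _ _ ha hb => rw [mul_add]; exact add_mem ha hb
  | smul c a _ ha => rw [mul_smul_comm]; exact smul_mem _ _ ha

lemma mul_right_span {S T : Set A} (y : A) (h : ∀ s ∈ S, s * y ∈ span k T) :
    ∀ x ∈ span k S, x * y ∈ span k T := by
  intro x hx
  induction hx using Submodule.span_induction with
  | mem s hs => exact h s hs
  | zero => simp
  | add a b _ _ ha hb => rw [add_mul]; exact add_mem ha hb
  | smul c a _ ha => rw [smul_mul_assoc]; exact smul_mem _ _ ha

lemma chain_head_le {b : ι} {t : List ι} (h : (b :: t).Chain' (· ≤ ·)) {y : ι}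
    (hy : y ∈ t) : b ≤ y := by
  replace h := List.isChain_iff_pairwise.mp h
  exact (List.pairwise_cons.mp h).1 y hy

lemma chain_mem_of_lower {b : ι} {t : List ι} (hΩ : IsLowerSet Ω)
    (h : (b :: t).Chain' (· ≤ ·)) (hy : ∃ y ∈ b :: t, y ∈ Ω) : b ∈ Ω := by
  obtain ⟨y, hy1, hy2⟩ := hy
  rcases List.mem_cons.mp hy1 with rfl | hy1
  · exact hy2
  · exact hΩ (chain_head_le h hy1) hy2

/-- The main straightening/spanning lemma. -/
lemma mainL (hΩ : IsLowerSet Ω) :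
    ∀ n : ℕ, ∀ a : ι, ∀ l : List ι, l.length ≤ n → l.Chain' (· ≤ ·) →
      Q.elem a * mono Q l ∈
        span k (Tset Q Ω a n (a ∈ Ω ∨ ∃ y ∈ l, y ∈ Ω)) := by
  intro n
  induction n using Nat.strong_induction_on with
  | _ n ihn =>
  intro a
  induction a using WellFoundedLT.induction with
  | _ a iha =>
  intro l hlen hchain
  cases l with
  | nil =>
      refine subset_span ⟨a, [], List.isChain_singleton a, by simp, le_refl a, ?_, by simp [mono]⟩
      intro h
      rcases h with h | h
      · exact h
      · simp at h
  | cons b t =>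
      have hlen1 : t.length + 1 ≤ n := by simpa using hlen
      have htlen : t.length ≤ n - 1 := by omega
      have hn' : n - 1 < n := by omega
      by_cases hab : a ≤ b
      · refine subset_span ⟨a, b :: t, List.isChain_cons_cons.mpr ⟨hab, hchain⟩,
          by simpa using hlen1, le_refl a, ?_, (mono_cons Q a (b :: t)).symm⟩
        intro h
        rcases h with h | h
        · exact h
        · exact hΩ hab (chain_mem_of_lower Ω hΩ hchain h)
      · -- the relation terms land in the right span
        have key : ∀ z ∈ ({x : A | ∃ lam : ι, lam < a ∧ lam < b ∧
              (x = Q.elem lam ∨ ∃ mu : ι, lam ≤ mu ∧ x = Q.elem lam * Q.elem mu)} : Set A),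
            z * mono Q t ∈
              span k (Tset Q Ω a n (a ∈ Ω ∨ ∃ y ∈ b :: t, y ∈ Ω)) := by
          rintro z ⟨lam, hla, hlb, hz | ⟨mu, hlm, hz⟩⟩
          · subst hz
            have h1 := ihn (n - 1) hn' lam t htlen hchain.tail
            refine span_mono (Tset_mono Q Ω hla.le (Nat.sub_le n 1) ?_) h1
            intro h
            rcases h with h | ⟨y, hy, hyΩ⟩
            · exact Or.inl (hΩ hla.le h)
            · rcases List.mem_cons.mp hy with rfl | hy
              · exact Or.inl (hΩ hlb.le hyΩ)
              · exact Or.inr ⟨y, hy, hyΩ⟩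
          · subst hz
            rw [mul_assoc]
            have h1 := ihn (n - 1) hn' mu t htlen hchain.tail
            refine mul_left_span (Q.elem lam) ?_ _ h1
            rintro s ⟨b', t', hc', hlen', hb'mu, hωb', rfl⟩
            have h2 := iha lam hla (b' :: t') (by simp; omega) hc'
            refine span_mono (Tset_mono Q Ω hla.le (le_refl n) ?_) h2
            intro h
            rcases h with h | ⟨y, hy, hyΩ⟩
            · exact Or.inl (hΩ hla.le h)
            · rcases List.mem_cons.mp hy with rfl | hy
              · exact Or.inl (hΩ hlb.le hyΩ)
              · exact Or.inr ⟨b', List.mem_cons_self, hωb' (Or.inr ⟨y, hy, hyΩ⟩)⟩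
        by_cases hba : b ≤ a
        · have hblt : b < a := lt_of_le_not_ge hba hab
          obtain ⟨c, hc0, hrel⟩ := Q.comm a b
          have expand : Q.elem a * mono Q (b :: t) =
              (Q.elem a * Q.elem b - c • (Q.elem b * Q.elem a)) * mono Q t
                + c • (Q.elem b * (Q.elem a * mono Q t)) := by
            rw [mono_cons, sub_mul, smul_mul_assoc, mul_assoc, mul_assoc, ← mul_assoc,
              sub_add_cancel]
          rw [expand]
          refine add_mem (mul_right_span _ key _ hrel) (smul_mem _ _ ?_)
          have h1 := ihn (n - 1) hn' a t htlen hchain.tail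
          refine mul_left_span (Q.elem b) ?_ _ h1
          rintro s ⟨b', t', hc', hlen', hb'a, hωb', rfl⟩
          by_cases hbb' : b ≤ b'
          · refine subset_span ⟨b, b' :: t', List.isChain_cons_cons.mpr ⟨hbb', hc'⟩,
              by simp; omega, hblt.le, ?_, (mono_cons Q b (b' :: t')).symm⟩
            intro h
            rcases h with h | ⟨y, hy, hyΩ⟩
            · exact hΩ hblt.le h
            · rcases List.mem_cons.mp hy with rfl | hy
              · exact hyΩ
              · exact hΩ hbb' (hωb' (Or.inr ⟨y, hy, hyΩ⟩))
          · have h2 := iha b hblt (b' :: t') (by simp; omega) hc'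
            refine span_mono (Tset_mono Q Ω hblt.le (le_refl n) ?_) h2
            intro h
            rcases h with h | ⟨y, hy, hyΩ⟩
            · exact Or.inl (hΩ hblt.le h)
            · rcases List.mem_cons.mp hy with rfl | hy
              · exact Or.inl hyΩ
              · exact Or.inr ⟨b', List.mem_cons_self, hωb' (Or.inr ⟨y, hy, hyΩ⟩)⟩
        · have hrel := Q.straighten a b hab hba
          rw [mono_cons, ← mul_assoc]
          exact mul_right_span _ key _ hrel


/-- the set of standard monomials -/
def Mset : Set A := {x | ∃ l : List ι, l.Chain' (· ≤ ·) ∧ x = mono Q l}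

/-- the set of standard monomials whose head lies in `Ω` -/
def Oset : Set A :=
  {x | ∃ b t, (b :: t).Chain' (· ≤ ·) ∧ b ∈ Ω ∧ x = mono Q (b :: t)}

lemma Tset_subset_Mset (a : ι) (n : ℕ) (ω : Prop) : Tset Q Ω a n ω ⊆ Mset Q := by
  rintro x ⟨b, t, h1, _, _, _, h5⟩
  exact ⟨b :: t, h1, h5⟩

lemma Tset_subset_Oset (a : ι) (n : ℕ) {ω : Prop} (hω : ω) :
    Tset Q Ω a n ω ⊆ Oset Q Ω := by
  rintro x ⟨b, t, h1, _, _, h4, h5⟩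
  exact ⟨b, t, h1, h4 hω, h5⟩

variable {Ω}

lemma elem_mul_span_Mset (hΩ : IsLowerSet Ω) (a : ι) :
    ∀ x ∈ span k (Mset Q), Q.elem a * x ∈ span k (Mset Q) := by
  refine mul_left_span _ ?_
  rintro s ⟨l, hl, rfl⟩
  exact span_mono (Tset_subset_Mset Q Ω a l.length _)
    (mainL Q Ω hΩ l.length a l le_rfl hl)

lemma mono_mul_span_Mset (hΩ : IsLowerSet Ω) (l : List ι) :
    ∀ x ∈ span k (Mset Q), mono Q l * x ∈ span k (Mset Q) := by
  induction l with
  | nil => intro x hx; simpa [mono_nil] using hx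
  | cons b t ih =>
      intro x hx
      rw [mono_cons, mul_assoc]
      exact elem_mul_span_Mset Q hΩ b _ (ih x hx)

lemma mem_span_Mset (hΩ : IsLowerSet Ω) (x : A) : x ∈ span k (Mset Q) := by
  have hmul : ∀ u v : A, u ∈ span k (Mset Q) → v ∈ span k (Mset Q) →
      u * v ∈ span k (Mset Q) := by
    intro u v hu hv
    refine mul_right_span (S := Mset Q) v ?_ u hu
    rintro s ⟨l, hl, rfl⟩
    exact mono_mul_span_Mset Q hΩ l v hv
  let S : Subalgebra k A := (span k (Mset Q)).toSubalgebra
    (subset_span ⟨[], List.isChain_nil, rfl⟩) (fun u v hu hv => hmul u v hu hv)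
  have hS : Algebra.adjoin k (Set.range Q.elem) ≤ S := by
    refine Algebra.adjoin_le ?_
    rintro y ⟨a, rfl⟩
    exact subset_span ⟨[a], List.isChain_singleton a, by simp [mono]⟩
  rw [Q.gen] at hS
  exact hS (by trivial)

lemma elem_mul_span_Oset (hΩ : IsLowerSet Ω) (a : ι) :
    ∀ x ∈ span k (Oset Q Ω), Q.elem a * x ∈ span k (Oset Q Ω) := by
  refine mul_left_span _ ?_
  rintro s ⟨b, t, h1, h2, rfl⟩
  refine span_mono (Tset_subset_Oset Q Ω a (b :: t).length
    (ω := a ∈ Ω ∨ ∃ y ∈ b :: t, y ∈ Ω) (Or.inr ⟨b, List.mem_cons_self, h2⟩)) ?_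
  exact mainL Q Ω hΩ (b :: t).length a (b :: t) le_rfl h1

/-- the span of `Oset` is a left ideal -/
lemma mul_left_span_Oset (hΩ : IsLowerSet Ω) (x : A) :
    ∀ y ∈ span k (Oset Q Ω), x * y ∈ span k (Oset Q Ω) := by
  intro y hy
  have hmono : ∀ l : List ι, mono Q l * y ∈ span k (Oset Q Ω) := by
    intro l
    induction l with
    | nil => simpa [mono_nil] using hy
    | cons b t ih =>
        rw [mono_cons, mul_assoc]
        exact elem_mul_span_Oset Q hΩ b _ ih
  refine mul_right_span (S := Mset Q) y ?_ x (mem_span_Mset Q hΩ x)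
  rintro s ⟨l, hl, rfl⟩
  exact hmono l

/-- `elem b *` maps the span of all standard monomials into `span Oset`, when `b ∈ Ω` -/
lemma elem_mem_mul_span_Mset (hΩ : IsLowerSet Ω) {b : ι} (hb : b ∈ Ω) :
    ∀ x ∈ span k (Mset Q), Q.elem b * x ∈ span k (Oset Q Ω) := by
  refine mul_left_span _ ?_
  rintro s ⟨l, hl, rfl⟩
  refine span_mono (Tset_subset_Oset Q Ω b l.length
    (ω := b ∈ Ω ∨ ∃ y ∈ l, y ∈ Ω) (Or.inl hb)) ?_
  exact mainL Q Ω hΩ l.length b l le_rfl hl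

/-- the span of `Oset` is a right ideal -/
lemma mul_right_span_Oset (hΩ : IsLowerSet Ω) (x : A) :
    ∀ y ∈ span k (Oset Q Ω), y * x ∈ span k (Oset Q Ω) := by
  refine mul_right_span (S := Oset Q Ω) x ?_
  rintro s ⟨b, t, h1, h2, rfl⟩
  rw [mono_cons, mul_assoc]
  refine elem_mem_mul_span_Mset Q hΩ h2 _ ?_
  exact mul_right_span (S := Mset Q) x
    (fun s ⟨l, hl, hx⟩ => hx ▸ mono_mul_span_Mset Q hΩ l x (mem_span_Mset Q hΩ x))
    (mono Q t) (subset_span ⟨t, h1.tail, rfl⟩)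

/-- identification of the two-sided ideal generated by `Ω` with the span of `Oset` -/
lemma twoSidedIdeal_eq_span_Oset (hΩ : IsLowerSet Ω) :
    (TwoSidedIdeal.span (Q.elem '' Ω) : Set A) = ↑(span k (Oset Q Ω)) := by
  apply Set.Subset.antisymm
  · intro x hx
    have hx' := TwoSidedIdeal.mem_span_iff.mp hx
    have := hx' (TwoSidedIdeal.mk' (↑(span k (Oset Q Ω)))
      (zero_mem _) (fun ha hb => add_mem ha hb) (fun ha => neg_mem ha)
      (fun {u v} hv => mul_left_span_Oset Q hΩ u v hv)
      (fun {u v} hu => mul_right_span_Oset Q hΩ v u hu)) ?_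
    · rwa [TwoSidedIdeal.mem_mk'] at this
    · rintro y ⟨b, hb, rfl⟩
      exact subset_span ⟨b, [], List.isChain_singleton b, hb, by simp [mono]⟩
  · intro x hx
    induction hx using Submodule.span_induction with
    | mem s hs =>
        obtain ⟨b, t, h1, h2, rfl⟩ := hs
        rw [mono_cons]
        refine TwoSidedIdeal.mul_mem_right _ _ _ (TwoSidedIdeal.subset_span ?_)
        exact Set.mem_image_of_mem _ h2
    | zero => exact zero_mem _
    | add u v _ _ hu hv => exact add_mem hu hv
    | smul c u _ hu =>
        rw [Algebra.smul_def]
        exact TwoSidedIdeal.mul_mem_left _ _ _ hu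


lemma mono_homogeneous (l : List ι) : ∃ d : ℕ, mono Q l ∈ 𝒜 d := by
  letI := Q.graded
  induction l with
  | nil => exact ⟨0, SetLike.GradedOne.one_mem⟩
  | cons b t ih =>
      obtain ⟨d, _, hd⟩ := Q.homog b
      obtain ⟨e, he⟩ := ih
      refine ⟨d + e, ?_⟩
      rw [mono_cons]
      exact SetLike.mul_mem_graded hd he

/-- the span of `Oset` as a (left) ideal -/
def OIdeal (hΩ : IsLowerSet Ω) : Ideal A where
  carrier := span k (Oset Q Ω)
  add_mem' := fun ha hb => add_mem ha hb
  zero_mem' := zero_mem _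
  smul_mem' := fun a x hx => by
    rw [smul_eq_mul]
    exact mul_left_span_Oset Q hΩ a x hx

lemma mem_idealSpan_Oset_iff (hΩ : IsLowerSet Ω) (x : A) :
    x ∈ Ideal.span (Oset Q Ω) ↔ x ∈ span k (Oset Q Ω) := by
  constructor
  · intro hx
    exact (Ideal.span_le (I := OIdeal Q hΩ)).mpr Submodule.subset_span hx
  · intro hx
    induction hx using Submodule.span_induction with
    | mem s hs => exact Ideal.subset_span hs
    | zero => exact zero_mem _
    | add u v _ _ hu hv => exact add_mem hu hv
    | smul c u _ hu =>
        rw [← algebraMap_smul A c u]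
        exact Submodule.smul_mem _ _ hu

end QASLAux

open QASLAux Submodule in
/-- Let `A` be a quantum graded A.S.L. on the finite poset `(Π, ≤st)`, let `Ω`
be a `Π`-ideal and let `p : A → A/⟨Ω⟩` be the canonical projection (modelled here by any
surjective `k`-algebra map `p` whose kernel is the two-sided ideal generated by `Ω`).  Then
`A/⟨Ω⟩`, with the induced grading, is a quantum graded A.S.L. on the poset `p(Π∖Ω) ≅ Π∖Ω`
with the inherited partial order. -/
theorem qasl_quotient_by_pi_ideal {k : Type*} [Field k] {A : Type*} [Ring A] [Algebra k A]
    {𝒜 : ℕ → Submodule k A} {ι : Type*} [PartialOrder ι] [Finite ι]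
    (Q : QuantumGradedASL k A 𝒜 ι) (Ω : Set ι) (hΩ : IsLowerSet Ω)
    (B : Type*) [Ring B] [Algebra k B] (p : A →ₐ[k] B)
    (hsurj : Function.Surjective p)
    (hker : (RingHom.ker (p : A →+* B) : Set A) = (TwoSidedIdeal.span (Q.elem '' Ω) : Set A)) :
    ∃ Q' : QuantumGradedASL k B (fun i : ℕ => (𝒜 i).map p.toLinearMap) {a : ι // a ∉ Ω},
      ∀ x : {a : ι // a ∉ Ω}, Q'.elem x = p (Q.elem (x : ι)) := by
  letI := Q.graded
  set ι' := {a : ι // a ∉ Ω}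
  set e' : ι' → B := fun x => p (Q.elem (x : ι)) with he'
  -- kernel description
  have hkermem : ∀ x : A, p x = 0 ↔ x ∈ span k (Oset Q Ω) := by
    intro x
    have h1 := Set.ext_iff.mp (hker.trans (twoSidedIdeal_eq_span_Oset Q hΩ)) x
    simpa [RingHom.mem_ker] using h1
  -- kernel is homogeneous
  have hhom : Ideal.IsHomogeneous 𝒜 (Ideal.span (Oset Q Ω)) := by
    refine Ideal.homogeneous_span 𝒜 _ ?_
    rintro x ⟨b, t, h1, h2, rfl⟩
    exact mono_homogeneous Q (b :: t)
  have hdecomp0 : ∀ x : A, p x = 0 → ∀ i : ℕ,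
      p (DirectSum.decompose 𝒜 x i : A) = 0 := by
    intro x hx i
    have h1 : x ∈ Ideal.span (Oset Q Ω) :=
      (mem_idealSpan_Oset_iff Q hΩ x).mpr ((hkermem x).mp hx)
    exact (hkermem _).mpr ((mem_idealSpan_Oset_iff Q hΩ _).mp (hhom i h1))
  -- the graded pieces of B
  set ℬ : ℕ → Submodule k B := fun i : ℕ => (𝒜 i).map p.toLinearMap with hℬ
  have hsup : (⨆ i, ℬ i) = ⊤ := by
    rw [hℬ, ← Submodule.map_iSup,
      DirectSum.IsInternal.submodule_iSup_eq_top (DirectSum.Decomposition.isInternal 𝒜),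
      Submodule.map_top, LinearMap.range_eq_top]
    exact hsurj
  have hind : iSupIndep ℬ := by
    intro i
    rw [Submodule.disjoint_def]
    intro v hv1 hv2
    obtain ⟨x, hx, rfl⟩ := hv1
    have hv2' : (⨆ j, ⨆ (_ : j ≠ i), ℬ j) =
        Submodule.map p.toLinearMap (⨆ j, ⨆ (_ : j ≠ i), 𝒜 j) := by
      simp_rw [Submodule.map_iSup]
      rfl
    rw [hv2'] at hv2
    obtain ⟨y, hy, hxy⟩ := hv2
    have hdy : (DirectSum.decompose 𝒜 y i : A) = 0 := by
      refine Submodule.iSup_induction (motive := fun z => (DirectSum.decompose 𝒜 z i : A) = 0)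
        (fun j => ⨆ (_ : j ≠ i), 𝒜 j) hy ?_ (by simp) ?_
      · intro j z hz
        beta_reduce at hz
        rcases eq_or_ne j i with rfl | hj
        · rw [show (⨆ (_ : j ≠ j), 𝒜 j) = ⊥ from iSup_neg (fun h => h rfl)] at hz
          rw [Submodule.mem_bot] at hz
          subst hz
          simp
        · rw [iSup_pos hj] at hz
          exact DirectSum.decompose_of_mem_ne 𝒜 hz hj
      · intro u v hu hv
        rw [DirectSum.decompose_add, DirectSum.add_apply, Submodule.coe_add, hu, hv, add_zero]
    have hsub : (DirectSum.decompose 𝒜 (x - y) i : A) = x := by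
      rw [DirectSum.decompose_sub, DirectSum.sub_apply, Submodule.coe_sub,
        DirectSum.decompose_of_mem_same 𝒜 hx, hdy, sub_zero]
    have hky : p (x - y) = 0 := by
      have hxy' : p y = p x := hxy
      rw [map_sub, hxy', sub_self]
    have : p x = 0 := by
      rw [← hsub]
      exact hdecomp0 _ hky i
    exact this
  have hinternal : DirectSum.IsInternal ℬ :=
    DirectSum.isInternal_submodule_of_iSupIndep_of_iSup_eq_top hind hsup
  haveI hgm : SetLike.GradedMonoid ℬ :=
    { one_mem := ⟨1, SetLike.GradedOne.one_mem, map_one p⟩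
      mul_mem := by
        rintro i j _ _ ⟨x, hx, rfl⟩ ⟨y, hy, rfl⟩
        exact ⟨x * y, SetLike.mul_mem_graded hx hy, map_mul p x y⟩ }
  haveI hdec : DirectSum.Decomposition ℬ := hinternal.chooseDecomposition
  have hgraded : GradedAlgebra ℬ := { toGradedMonoid := hgm, toDecomposition := hdec }
  -- generation
  have hgen : Algebra.adjoin k (Set.range e') = ⊤ := by
    rw [eq_top_iff]
    have h1 : (⊤ : Subalgebra k B) = Subalgebra.map p ⊤ := by
      rw [Algebra.map_top, (AlgHom.range_eq_top p).mpr hsurj]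
    rw [h1, ← Q.gen, AlgHom.map_adjoin]
    refine Algebra.adjoin_le ?_
    rintro y ⟨x, ⟨a, rfl⟩, rfl⟩
    by_cases ha : a ∈ Ω
    · have : p (Q.elem a) = 0 :=
        (hkermem _).mpr (subset_span ⟨a, [], List.isChain_singleton a, ha, by simp [mono]⟩)
      rw [this]
      exact zero_mem _
    · exact Algebra.subset_adjoin ⟨⟨a, ha⟩, rfl⟩
  -- linear independence
  have hindep : LinearIndependent k
      (fun l : {l : List ι' // l.Chain' (· ≤ ·)} => ((l : List ι').map e').prod) := by
    set J : {l : List ι' // l.Chain' (· ≤ ·)} → {l : List ι // l.Chain' (· ≤ ·)} :=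
      fun l => ⟨(l : List ι').map Subtype.val,
        List.isChain_map_of_isChain Subtype.val (fun _ _ h => Subtype.coe_le_coe.mpr h) l.2⟩ with hJ
    have hJinj : Function.Injective J := by
      intro l1 l2 h
      have := congrArg Subtype.val h
      exact Subtype.ext (List.map_injective_iff.mpr Subtype.val_injective this)
    have hcomp : LinearIndependent k
        (fun l : {l : List ι' // l.Chain' (· ≤ ·)} =>
          ((J l : List ι).map Q.elem).prod) := Q.indep.comp J hJinj
    have heq : ∀ l : {l : List ι' // l.Chain' (· ≤ ·)},
        ((l : List ι').map e').prod = p (((J l : List ι)).map Q.elem).prod := by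
      intro l
      rw [map_list_prod]
      congr 1
      rw [hJ]
      rw [List.map_map, List.map_map]
      rfl
    rw [linearIndependent_iff']
    intro s g hsum i hi
    have hker0 : p (∑ l ∈ s, g l • ((J l : List ι).map Q.elem).prod) = 0 := by
      rw [map_sum]
      simp_rw [map_smul, ← heq]
      exact hsum
    set x : A := ∑ l ∈ s, g l • ((J l : List ι).map Q.elem).prod with hx
    have hx2 : x ∈ span k
        ((fun l : {l : List ι // l.Chain' (· ≤ ·)} => ((l : List ι).map Q.elem).prod) ''
          {l | ∃ y ∈ (l : List ι), y ∈ Ω}) := by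
      refine span_mono ?_ ((hkermem x).mp hker0)
      rintro z ⟨b, t, h1, h2, rfl⟩
      exact ⟨⟨b :: t, h1⟩, ⟨b, List.mem_cons_self, h2⟩, rfl⟩
    have hx1 : x ∈ span k
        ((fun l : {l : List ι // l.Chain' (· ≤ ·)} => ((l : List ι).map Q.elem).prod) ''
          {l | ∀ y ∈ (l : List ι), y ∉ Ω}) := by
      refine Submodule.sum_mem _ ?_
      intro l _
      refine Submodule.smul_mem _ _ (subset_span ⟨J l, ?_, rfl⟩)
      rintro y hy
      simp only [hJ, List.mem_map] at hy
      obtain ⟨z, _, rfl⟩ := hy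
      exact z.2
    have hdisj : Disjoint {l : {l : List ι // l.Chain' (· ≤ ·)} | ∀ y ∈ (l : List ι), y ∉ Ω}
        {l : {l : List ι // l.Chain' (· ≤ ·)} | ∃ y ∈ (l : List ι), y ∈ Ω} := by
      rw [Set.disjoint_left]
      rintro l h1 ⟨y, hy, hyΩ⟩
      exact h1 y hy hyΩ
    have hx0 : x = 0 :=
      Submodule.disjoint_def.mp (Q.indep.disjoint_span_image hdisj) x hx1 hx2
    exact linearIndependent_iff'.mp hcomp s g hx0 i hi
  -- transfer of the straightening relations
  have htransfer : ∀ a b : ι',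
      ∀ x ∈ span k {x : A | ∃ lam : ι, lam < (a : ι) ∧ lam < (b : ι) ∧
        (x = Q.elem lam ∨ ∃ mu : ι, lam ≤ mu ∧ x = Q.elem lam * Q.elem mu)},
      p x ∈ span k {x : B | ∃ lam : ι', lam < a ∧ lam < b ∧
        (x = e' lam ∨ ∃ mu : ι', lam ≤ mu ∧ x = e' lam * e' mu)} := by
    intro a b x hx
    have h1 : p x ∈ Submodule.map p.toLinearMap
        (span k {x : A | ∃ lam : ι, lam < (a : ι) ∧ lam < (b : ι) ∧
          (x = Q.elem lam ∨ ∃ mu : ι, lam ≤ mu ∧ x = Q.elem lam * Q.elem mu)}) :=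
      Submodule.mem_map_of_mem hx
    rw [Submodule.map_span] at h1
    refine span_le.mpr ?_ h1
    rintro y ⟨z, ⟨lam, hla, hlb, hz⟩, rfl⟩
    by_cases hlam : lam ∈ Ω
    · have hz0 : p z = 0 := by
        refine (hkermem z).mpr ?_
        rcases hz with rfl | ⟨mu, hlm, rfl⟩
        · exact subset_span ⟨lam, [], List.isChain_singleton lam, hlam, by simp [mono]⟩
        · exact subset_span ⟨lam, [mu], List.isChain_pair.mpr hlm, hlam, by simp [mono, mono_cons]⟩
      rw [AlgHom.toLinearMap_apply, hz0]
      exact zero_mem _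
    · rcases hz with rfl | ⟨mu, hlm, rfl⟩
      · exact subset_span ⟨⟨lam, hlam⟩, Subtype.coe_lt_coe.mp hla,
          Subtype.coe_lt_coe.mp hlb, Or.inl rfl⟩
      · have hmu : mu ∉ Ω := fun h => hlam (hΩ hlm h)
        refine subset_span ⟨⟨lam, hlam⟩, Subtype.coe_lt_coe.mp hla,
          Subtype.coe_lt_coe.mp hlb, Or.inr ⟨⟨mu, hmu⟩, Subtype.coe_le_coe.mp hlm, ?_⟩⟩
        simp [he', map_mul]
  refine ⟨{ elem := e'
            graded := hgraded
            homog := ?_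
            gen := hgen
            indep := hindep
            straighten := ?_
            comm := ?_ }, fun x => rfl⟩
  · intro i
    obtain ⟨d, hd0, hd⟩ := Q.homog (i : ι)
    exact ⟨d, hd0, ⟨Q.elem (i : ι), hd, rfl⟩⟩
  · intro a b hab hba
    have h1 := Q.straighten (a : ι) (b : ι)
      (fun h => hab (Subtype.coe_le_coe.mp h)) (fun h => hba (Subtype.coe_le_coe.mp h))
    have h2 := htransfer a b _ h1
    rwa [map_mul] at h2
  · intro a b
    obtain ⟨c, hc0, h1⟩ := Q.comm (a : ι) (b : ι)
    refine ⟨c, hc0, ?_⟩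
    have h2 := htransfer a b _ h1
    rwa [map_sub, map_mul, map_smul, map_mul] at h2
end

section
/- Let m ≤ n be positive integers. The map δ_{m,n} : Δ_{m,n} → Π_{m,n+m}∖{{n+1,…,n+m}} sending (I,J) to K_{(I,J)}, the index set obtained by ordering {j₁,…,j_t, n+1,…,n+m}∖{n+m+1−i₁,…,n+m+1−i_t}, is a bijection, and for all (I,J),(K,L) ∈ Δ_{m,n}, one has (I,J) ≤st (K,L) if and only if δ_{m,n}((I,J)) ≤st δ_{m,n}((K,L)); i.e. δ_{m,n} is an isomorphism of posets from (Δ_{m,n}, ≤st) onto (Π_{m,n+m}∖{{n+1<⋯<n+m}}, ≤st). -/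
/-- An index pair `(I,J) ∈ Δ_{m,n}`: a pair of subsets `I ⊆ {1,…,m}`, `J ⊆ {1,…,n}` with
`|I| = |J| = t` for some `1 ≤ t ≤ m`, encoded by strictly increasing enumerations. -/
structure DeltaIdx (m n : ℕ) where
  /-- the common cardinality of the two index sets -/
  t : ℕ
  t_pos : 0 < t
  t_le : t ≤ m
  /-- the row index set `I = {i₁ < ⋯ < i_t}` -/
  I : Fin t ↪o Fin m
  /-- the column index set `J = {j₁ < ⋯ < j_t}` -/
  J : Fin t ↪o Fin n

namespace DeltaIdx

/-- The standard partial order on `Δ_{m,n}`:  `(I,J) ≤st (K,L)` iff `|I| ≥ |K| = v`,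
`i_s ≤ k_s` and `j_s ≤ l_s` for `1 ≤ s ≤ v`. -/
instance (m n : ℕ) : PartialOrder (DeltaIdx m n) where
  le P Q := ∃ h : Q.t ≤ P.t,
    (∀ s : Fin Q.t, P.I (Fin.castLE h s) ≤ Q.I s) ∧
    (∀ s : Fin Q.t, P.J (Fin.castLE h s) ≤ Q.J s)
  le_refl P := ⟨le_rfl, fun s => le_of_eq (congrArg P.I (Fin.ext rfl)),
    fun s => le_of_eq (congrArg P.J (Fin.ext rfl))⟩
  le_trans P Q R := by
    rintro ⟨h1, hI1, hJ1⟩ ⟨h2, hI2, hJ2⟩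
    refine ⟨h2.trans h1, fun s => ?_, fun s => ?_⟩
    · have e : Fin.castLE (h2.trans h1) s = Fin.castLE h1 (Fin.castLE h2 s) := Fin.ext rfl
      rw [e]
      exact (hI1 _).trans (hI2 s)
    · have e : Fin.castLE (h2.trans h1) s = Fin.castLE h1 (Fin.castLE h2 s) := Fin.ext rfl
      rw [e]
      exact (hJ1 _).trans (hJ2 s)
  le_antisymm P Q := by
    rintro ⟨h1, hI1, hJ1⟩ ⟨h2, hI2, hJ2⟩
    obtain ⟨t, ht0, htm, I, J⟩ := P
    obtain ⟨t', ht0', htm', I', J'⟩ := Q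
    dsimp only at h1 h2 hI1 hI2 hJ1 hJ2
    have ht : t = t' := le_antisymm h2 h1
    subst ht
    have eI : I = I' := by
      ext s
      have e : Fin.castLE h1 s = s := Fin.ext rfl
      have e2 : Fin.castLE h2 s = s := Fin.ext rfl
      exact congrArg Fin.val (le_antisymm (by simpa [e] using hI1 s) (by simpa [e2] using hI2 s))
    have eJ : J = J' := by
      ext s
      have e : Fin.castLE h1 s = s := Fin.ext rfl
      have e2 : Fin.castLE h2 s = s := Fin.ext rfl
      exact congrArg Fin.val (le_antisymm (by simpa [e] using hJ1 s) (by simpa [e2] using hJ2 s))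
    rw [eI, eJ]

/-- The padding map used to prove that `Δ_{m,n}` is finite. -/
def pad {m n : ℕ} (P : DeltaIdx m n) :
    (Fin m → WithTop (Fin m)) × (Fin m → WithTop (Fin n)) :=
  (fun s => if h : (s : ℕ) < P.t then (P.I ⟨s, h⟩ : WithTop (Fin m)) else ⊤,
   fun s => if h : (s : ℕ) < P.t then (P.J ⟨s, h⟩ : WithTop (Fin n)) else ⊤)

lemma pad_injective {m n : ℕ} : Function.Injective (pad (m := m) (n := n)) := by
  intro P Q hPQ
  have h1 := congrArg Prod.fst hPQ
  have h2 := congrArg Prod.snd hPQ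
  simp only [pad] at h1 h2
  have ht : P.t = Q.t := by
    by_contra hne
    rcases Nat.lt_or_ge P.t Q.t with h | h
    · have hfun := congrFun h1 ⟨P.t, lt_of_lt_of_le h Q.t_le⟩
      rw [dif_neg (by simp), dif_pos (by simpa using h)] at hfun
      exact (WithTop.coe_ne_top (hfun.symm)).elim
    · rcases Nat.lt_or_ge Q.t P.t with h' | h'
      · have hfun := congrFun h1 ⟨Q.t, lt_of_lt_of_le h' P.t_le⟩
        rw [dif_pos (by simpa using h'), dif_neg (by simp)] at hfun
        exact (WithTop.coe_ne_top hfun).elim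
      · exact hne (le_antisymm h' h)
  obtain ⟨t, ht0, htm, I, J⟩ := P
  obtain ⟨t', ht0', htm', I', J'⟩ := Q
  dsimp only at ht h1 h2
  subst ht
  have eI : I = I' := by
    ext s
    have hfun := congrFun h1 ⟨(s : ℕ), lt_of_lt_of_le s.isLt htm⟩
    rw [dif_pos (by simp), dif_pos (by simp)] at hfun
    have : I ⟨(s : ℕ), s.isLt⟩ = I' ⟨(s : ℕ), s.isLt⟩ := by
      exact_mod_cast hfun
    simpa using congrArg Fin.val this
  have eJ : J = J' := by
    ext s
    have hfun := congrFun h2 ⟨(s : ℕ), lt_of_lt_of_le s.isLt htm⟩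
    rw [dif_pos (by simp), dif_pos (by simp)] at hfun
    have : J ⟨(s : ℕ), s.isLt⟩ = J' ⟨(s : ℕ), s.isLt⟩ := by
      exact_mod_cast hfun
    simpa using congrArg Fin.val this
  rw [eI, eJ]

instance (m n : ℕ) : Finite (DeltaIdx m n) := by
  have : Finite (WithTop (Fin m)) := inferInstanceAs (Finite (Option (Fin m)))
  have : Finite (WithTop (Fin n)) := inferInstanceAs (Finite (Option (Fin n)))
  exact Finite.of_injective pad pad_injective

end DeltaIdx

/-- The index set `K_{(I,J)} ∈ Π_{m,n+m}` associated to an index pair `(I,J) ∈ Δ_{m,n}`: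
the `m`-element subset of `{1,…,n+m}` obtained by ordering
`{j₁,…,j_t, n+1,…,n+m} ∖ {n+m+1−i₁,…,n+m+1−i_t}` (here as a `Finset` of `Fin (n+m)`,
`0`-indexed). -/
def deltaImage {m n : ℕ} (P : DeltaIdx m n) : Finset (Fin (n + m)) :=
  ((Finset.univ.image fun s : Fin P.t => Fin.castLE (Nat.le_add_right n m) (P.J s)) ∪
      (Finset.univ.image fun i : Fin m => Fin.natAdd n i)) \
    (Finset.univ.image fun s : Fin P.t => Fin.natAdd n (Fin.rev (P.I s)))


section Helpers
open Finset

section Counting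
variable {α : Type*} [LinearOrder α]

lemma card_filter_emb_le {u : ℕ} (f : Fin u ↪o α) (j : Fin u) :
    (univ.filter fun s => f s ≤ f j).card = (j : ℕ) + 1 := by
  have h : (univ.filter fun s => f s ≤ f j) = Finset.Iic j := by
    ext s; simp [f.le_iff_le]
  rw [h, Fin.card_Iic]

lemma card_filter_emb_lt {u : ℕ} (f : Fin u ↪o α) (j : Fin u) :
    (univ.filter fun s => f s < f j).card = (j : ℕ) := by
  have h : (univ.filter fun s => f s < f j) = Finset.Iio j := by
    ext s; simp [f.lt_iff_lt]
  rw [h, Fin.card_Iio]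

lemma emb_le_of_card_le {u : ℕ} (f : Fin u ↪o α) (j : Fin u) (x : α)
    (h : (j : ℕ) + 1 ≤ (univ.filter fun s => f s ≤ x).card) : f j ≤ x := by
  by_contra hc
  push_neg at hc
  have hsub : (univ.filter fun s => f s ≤ x) ⊆ (univ.filter fun s => f s < f j) := by
    intro s hs
    simp only [mem_filter, mem_univ, true_and] at *
    exact lt_of_le_of_lt hs hc
  have := (card_le_card hsub).trans_eq (card_filter_emb_lt f j)
  omega

lemma cnt_val_succ {u N : ℕ} (f : Fin u ↪o Fin N) (w : Fin N) :
    (univ.filter fun s => ((f s : ℕ) < (w : ℕ) + 1)).card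
      = (univ.filter fun s => f s ≤ w).card := by
  congr 1
  apply Finset.filter_congr
  intro s _
  simp only [eq_iff_iff, Fin.le_def, Nat.lt_succ_iff]

lemma cnt_val_emb_lt {u N : ℕ} (f : Fin u ↪o Fin N) (j : Fin u) :
    (univ.filter fun s => ((f s : ℕ) < ((f j : ℕ)))).card = (j : ℕ) := by
  rw [show (univ.filter fun s => ((f s : ℕ) < (f j : ℕ))) = univ.filter fun s => f s < f j from
    Finset.filter_congr (fun s _ => by simp only [eq_iff_iff, Fin.lt_def])]
  exact card_filter_emb_lt f j

lemma cnt_mono {u v : ℕ} (f : Fin u ↪o α) (g : Fin v ↪o α) (h : v ≤ u)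
    (hfg : ∀ s, f (Fin.castLE h s) ≤ g s) (p : α → Prop) [DecidablePred p]
    (hp : ∀ a b : α, a ≤ b → p b → p a) :
    (univ.filter fun s => p (g s)).card ≤ (univ.filter fun s => p (f s)).card := by
  apply card_le_card_of_injOn (fun s => Fin.castLE h s)
  · intro s hs
    simp only [mem_coe, mem_filter, mem_univ, true_and] at *
    exact hp _ _ (hfg s) hs
  · intro a _ b _ hab
    exact Fin.castLE_injective h hab

end Counting

section SortLemma
variable {α : Type*} [LinearOrder α]

lemma card_filter_image {u : ℕ} (f : Fin u ↪o α) (p : α → Prop) [DecidablePred p] :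
    ((univ.image f).filter p).card = (univ.filter fun s => p (f s)).card := by
  rw [Finset.filter_image]
  exact Finset.card_image_of_injective _ f.injective

lemma image_orderEmbOfFin [DecidableEq α] {m : ℕ} (S : Finset α) (hS : S.card = m) :
    univ.image (S.orderEmbOfFin hS) = S := by
  apply Finset.coe_injective
  rw [Finset.coe_image, Finset.coe_univ, Set.image_univ, Finset.range_orderEmbOfFin]

lemma forall₂_sort_iff {m : ℕ} (S T : Finset α) (hS : S.card = m) (hT : T.card = m) :
    List.Forall₂ (· ≤ ·) (S.sort (· ≤ ·)) (T.sort (· ≤ ·)) ↔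
      ∀ x : α, (T.filter fun y => y < x).card ≤ (S.filter fun y => y < x).card := by
  set f := S.orderEmbOfFin hS with hf
  set g := T.orderEmbOfFin hT with hg
  have hSf : ∀ p : α → Prop, ∀ inst : DecidablePred p,
      (S.filter p).card = (univ.filter fun s => p (f s)).card := by
    intro p inst
    rw [← image_orderEmbOfFin S hS, card_filter_image]
  have hTg : ∀ p : α → Prop, ∀ inst : DecidablePred p,
      (T.filter p).card = (univ.filter fun s => p (g s)).card := by
    intro p inst
    rw [← image_orderEmbOfFin T hT, card_filter_image]
  have hlenS : (S.sort (· ≤ ·)).length = m := by rw [Finset.length_sort, hS]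
  have hlenT : (T.sort (· ≤ ·)).length = m := by rw [Finset.length_sort, hT]
  have hpt : List.Forall₂ (· ≤ ·) (S.sort (· ≤ ·)) (T.sort (· ≤ ·)) ↔
      ∀ i : Fin m, f i ≤ g i := by
    rw [List.forall₂_iff_get]
    constructor
    · rintro ⟨-, hget⟩ i
      have := hget i (by omega) (by omega)
      simpa [hf, hg, Finset.orderEmbOfFin_apply, List.get_eq_getElem] using this
    · intro hfg
      refine ⟨by omega, fun i h1 h2 => ?_⟩
      have := hfg ⟨i, by omega⟩
      simpa [hf, hg, Finset.orderEmbOfFin_apply, List.get_eq_getElem] using this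
  rw [hpt]
  constructor
  · intro hfg x
    rw [hSf _ _, hTg _ _]
    refine cnt_mono f g le_rfl (fun s => ?_) (fun y => y < x) (fun a b hab hb => lt_of_le_of_lt hab hb)
    have : Fin.castLE le_rfl s = s := Fin.ext rfl
    rw [this]; exact hfg s
  · intro hc i
    by_contra hlt
    push_neg at hlt
    have hx := hc (f i)
    rw [hSf _ _, hTg _ _] at hx
    have h1 : (univ.filter fun s => f s < f i).card = (i : ℕ) := card_filter_emb_lt f i
    have h2 : (i : ℕ) + 1 ≤ (univ.filter fun s => g s < f i).card := by
      have hsub : Finset.Iic i ⊆ univ.filter fun s => g s < f i := by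
        intro s hs
        simp only [Finset.mem_Iic] at hs
        simp only [mem_filter, mem_univ, true_and]
        exact lt_of_le_of_lt (g.monotone hs) hlt
      have := card_le_card hsub
      rw [Fin.card_Iic] at this
      omega
    omega

end SortLemma

section Img
variable {α β : Type*} [Fintype β] [DecidableEq α]

lemma card_filter_image_inj (f : β → α) (hf : Function.Injective f) (p : α → Prop)
    [DecidablePred p] :
    ((univ.image f).filter p).card = (univ.filter fun s => p (f s)).card := by
  rw [Finset.filter_image]
  exact Finset.card_image_of_injective _ hf

end Img

namespace DeltaIdx
variable {m n : ℕ} (P : DeltaIdx m n)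

def setB (m n : ℕ) : Finset (Fin (n + m)) := univ.image fun i : Fin m => Fin.natAdd n i

lemma injB : Function.Injective fun i : Fin m => Fin.natAdd n i :=
  fun a b h => by
    have := congrArg Fin.val h
    simp only [Fin.coe_natAdd] at this
    exact Fin.ext (by omega)

lemma mem_setB_le {x : Fin (n + m)} (hx : x ∈ setB m n) : n ≤ (x : ℕ) := by
  simp only [setB, mem_image, mem_univ, true_and] at hx
  obtain ⟨s, rfl⟩ := hx
  simp

lemma card_setB : (setB m n).card = m := by
  rw [setB, Finset.card_image_of_injective _ (injB (m := m) (n := n)), card_univ,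
    Fintype.card_fin]

def setA : Finset (Fin (n + m)) :=
  univ.image fun s : Fin P.t => Fin.castLE (Nat.le_add_right n m) (P.J s)

def setC : Finset (Fin (n + m)) :=
  univ.image fun s : Fin P.t => Fin.natAdd n (Fin.rev (P.I s))

lemma deltaImage_def : deltaImage P = (P.setA ∪ setB m n) \ P.setC := rfl

lemma injA : Function.Injective fun s : Fin P.t => Fin.castLE (Nat.le_add_right n m) (P.J s) :=
  fun a b h => P.J.injective (Fin.castLE_injective _ h)

lemma injC : Function.Injective fun s : Fin P.t => Fin.natAdd n (Fin.rev (P.I s)) :=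
  fun a b h => P.I.injective (Fin.rev_injective (injB h))

lemma mem_setA_lt {x : Fin (n + m)} (hx : x ∈ P.setA) : (x : ℕ) < n := by
  simp only [setA, mem_image, mem_univ, true_and] at hx
  obtain ⟨s, rfl⟩ := hx
  exact (P.J s).isLt

lemma setC_subset : P.setC ⊆ setB m n := by
  intro x hx
  simp only [setC, setB, mem_image, mem_univ, true_and] at *
  obtain ⟨s, rfl⟩ := hx
  exact ⟨_, rfl⟩

lemma card_setA : P.setA.card = P.t := by
  rw [setA, Finset.card_image_of_injective _ P.injA, card_univ, Fintype.card_fin]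

lemma card_setC : P.setC.card = P.t := by
  rw [setC, Finset.card_image_of_injective _ P.injC, card_univ, Fintype.card_fin]

lemma disjAB : Disjoint P.setA (setB m n) := by
  rw [Finset.disjoint_left]
  intro x hxA hxB
  have h1 := P.mem_setA_lt hxA
  have h2 := mem_setB_le hxB
  omega

lemma card_deltaImage : (deltaImage P).card = m := by
  have h1 : deltaImage P = P.setA ∪ (setB m n \ P.setC) := by
    rw [deltaImage_def, Finset.union_sdiff_distrib,
      Finset.sdiff_eq_self_of_disjoint]
    exact Finset.disjoint_of_subset_right P.setC_subset P.disjAB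
  have h2 : Disjoint P.setA (setB m n \ P.setC) :=
    Finset.disjoint_of_subset_right (Finset.sdiff_subset) P.disjAB
  rw [h1, Finset.card_union_of_disjoint h2, Finset.card_sdiff_of_subset P.setC_subset,
    P.card_setA, card_setB, P.card_setC]
  have := P.t_le
  omega

lemma deltaImage_ne : deltaImage P ≠ univ.image (fun i : Fin m => Fin.natAdd n i) := by
  intro h
  have hJlt : ((P.J ⟨0, P.t_pos⟩ : Fin n) : ℕ) < n := (P.J ⟨0, P.t_pos⟩).isLt
  have hx : Fin.castLE (Nat.le_add_right n m) (P.J ⟨0, P.t_pos⟩) ∈ deltaImage P := by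
    rw [deltaImage_def, Finset.mem_sdiff, Finset.mem_union]
    refine ⟨Or.inl ?_, fun hc => ?_⟩
    · simp only [setA, mem_image, mem_univ, true_and]
      exact ⟨_, rfl⟩
    · have h2 := mem_setB_le (P.setC_subset hc)
      simp only [Fin.coe_castLE] at h2
      omega
  rw [h] at hx
  have h3 : n ≤ ((Fin.castLE (Nat.le_add_right n m) (P.J ⟨0, P.t_pos⟩) : Fin (n+m)) : ℕ) :=
    mem_setB_le (by rw [setB]; exact hx)
  simp only [Fin.coe_castLE] at h3
  omega

/-- count of `deltaImage` below a small threshold -/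
lemma cnt_low (x : Fin (n + m)) (hx : (x : ℕ) ≤ n) :
    ((deltaImage P).filter fun z => z < x).card
      = (univ.filter fun s : Fin P.t => ((P.J s : ℕ) < (x : ℕ))).card := by
  have hf : (deltaImage P).filter (fun z => z < x) = P.setA.filter (fun z => z < x) := by
    ext z
    simp only [deltaImage_def, Finset.mem_filter, Finset.mem_sdiff, Finset.mem_union]
    constructor
    · rintro ⟨⟨hAB, -⟩, hlt⟩
      refine ⟨hAB.resolve_right (fun hB => ?_), hlt⟩
      have h1 := mem_setB_le hB
      have hzx : (z : ℕ) < (x : ℕ) := hlt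
      omega
    · rintro ⟨hA, hlt⟩
      refine ⟨⟨Or.inl hA, fun hC => ?_⟩, hlt⟩
      have h1 := mem_setB_le (P.setC_subset hC)
      have hzx : (z : ℕ) < (x : ℕ) := hlt
      omega
  rw [hf, setA, card_filter_image_inj _ P.injA]
  simp only [Fin.lt_def, Fin.coe_castLE]

/-- count of `deltaImage` above threshold `n` -/
lemma cnt_high (x : Fin (n + m)) (hx : n ≤ (x : ℕ)) :
    ((deltaImage P).filter fun z => z < x).card
      = ((x : ℕ) - n) + (univ.filter fun s : Fin P.t => ((P.I s : ℕ) < m - ((x : ℕ) - n))).card := by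
  set y : ℕ := (x : ℕ) - n with hy
  have hym : y < m := by have := x.isLt; omega
  set S : Finset (Fin (n + m)) := P.setA ∪ (setB m n).filter (fun z => z < x) with hS
  have hfilt : (deltaImage P).filter (fun z => z < x) = S \ P.setC := by
    ext z
    simp only [hS, deltaImage_def, Finset.mem_filter, Finset.mem_sdiff, Finset.mem_union,
      Finset.mem_filter]
    constructor
    · rintro ⟨⟨hAB, hC⟩, hlt⟩
      rcases hAB with hA | hB
      · exact ⟨Or.inl hA, hC⟩
      · exact ⟨Or.inr ⟨hB, hlt⟩, hC⟩
    · rintro ⟨hAB, hC⟩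
      rcases hAB with hA | ⟨hB, hlt⟩
      · have h1 := P.mem_setA_lt hA
        exact ⟨⟨Or.inl hA, hC⟩, show (z : ℕ) < (x : ℕ) by omega⟩
      · exact ⟨⟨Or.inr hB, hC⟩, hlt⟩
  have hSC : S ∩ P.setC = P.setC.filter (fun z => z < x) := by
    ext z
    simp only [hS, Finset.mem_inter, Finset.mem_union, Finset.mem_filter]
    constructor
    · rintro ⟨hAB, hC⟩
      rcases hAB with hA | ⟨-, hlt⟩
      · have h1 := P.mem_setA_lt hA
        have h2 := mem_setB_le (P.setC_subset hC)
        omega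
      · exact ⟨hC, hlt⟩
    · rintro ⟨hC, hlt⟩
      exact ⟨Or.inr ⟨P.setC_subset hC, hlt⟩, hC⟩
  have hcardBf : ((setB m n).filter fun z => z < x).card = y := by
    rw [setB, card_filter_image_inj _ (injB (m := m) (n := n))]
    have he : (univ.filter fun i : Fin m => Fin.natAdd n i < x) = Finset.Iio (⟨y, hym⟩ : Fin m) := by
      ext i
      simp only [Finset.mem_filter, mem_univ, true_and, Finset.mem_Iio, Fin.lt_def,
        Fin.coe_natAdd]
      omega
    rw [he, Fin.card_Iio]
  have hcardS : S.card = P.t + y := by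
    rw [hS, Finset.card_union_of_disjoint, P.card_setA, hcardBf]
    exact Finset.disjoint_of_subset_right (Finset.filter_subset _ _) P.disjAB
  have hcardSC : (S ∩ P.setC).card
      = (univ.filter fun s : Fin P.t => ((Fin.rev (P.I s) : ℕ) < y)).card := by
    rw [hSC, setC, card_filter_image_inj _ P.injC]
    congr 1
    apply Finset.filter_congr
    intro s _
    simp only [Fin.lt_def, Fin.coe_natAdd, eq_iff_iff]
    omega
  have hrevle : (univ.filter fun s : Fin P.t => ((Fin.rev (P.I s) : ℕ) < y)).card ≤ P.t := by
    calc _ ≤ (univ : Finset (Fin P.t)).card := card_le_card (Finset.filter_subset _ _)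
    _ = P.t := by rw [card_univ, Fintype.card_fin]
  have hpart : (univ.filter fun s : Fin P.t => ((Fin.rev (P.I s) : ℕ) < y)).card
      + (univ.filter fun s : Fin P.t => ((P.I s : ℕ) < m - y)).card = P.t := by
    have hcompl : (univ.filter fun s : Fin P.t => ((P.I s : ℕ) < m - y))
        = univ.filter fun s : Fin P.t => ¬ ((Fin.rev (P.I s) : ℕ) < y) := by
      apply Finset.filter_congr
      intro s _
      have h1 : (Fin.rev (P.I s) : ℕ) = m - 1 - (P.I s : ℕ) := by
        rw [Fin.val_rev]
        omega
      have h2 := (P.I s).isLt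
      simp only [eq_iff_iff, h1]
      omega
    rw [hcompl, Finset.card_filter_add_card_filter_not, card_univ, Fintype.card_fin]
  have hfin : (S \ P.setC).card = S.card - (S ∩ P.setC).card := by
    rw [← Finset.sdiff_inter_self_left, Finset.card_sdiff_of_subset Finset.inter_subset_left]
  rw [hfilt, hfin, hcardS, hcardSC]
  omega

end DeltaIdx

namespace DeltaIdx

lemma surj {m n : ℕ} (hm : 0 < m) (S : Finset (Fin (n + m))) (hcard : S.card = m)
    (hne : S ≠ univ.image (fun i : Fin m => Fin.natAdd n i)) :
    ∃ P : DeltaIdx m n, deltaImage P = S := by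
  classical
  set SJ : Finset (Fin n) :=
    univ.filter (fun j : Fin n => Fin.castLE (Nat.le_add_right n m) j ∈ S) with hSJ
  set t := SJ.card with ht
  set Slow : Finset (Fin (n + m)) := S.filter (fun z => (z : ℕ) < n) with hSlow
  set Shigh : Finset (Fin (n + m)) := S.filter (fun z => ¬ ((z : ℕ) < n)) with hShigh
  have hlow : Slow = SJ.image (Fin.castLE (Nat.le_add_right n m)) := by
    ext z
    simp only [hSlow, hSJ, Finset.mem_filter, Finset.mem_image, mem_univ, true_and]
    constructor
    · rintro ⟨hz, hzn⟩
      refine ⟨⟨(z : ℕ), hzn⟩, ?_, Fin.ext rfl⟩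
      have he : Fin.castLE (Nat.le_add_right n m) (⟨(z : ℕ), hzn⟩ : Fin n) = z := Fin.ext rfl
      rwa [he]
    · rintro ⟨j, hj, rfl⟩
      exact ⟨hj, j.isLt⟩
  have hcardlow : Slow.card = t := by
    rw [hlow, Finset.card_image_of_injective _ (Fin.castLE_injective _)]
  have hsplit : Slow.card + Shigh.card = m := by
    rw [hSlow, hShigh, Finset.card_filter_add_card_filter_not, hcard]
  have htm : t ≤ m := by omega
  have ht1 : 0 < t := by
    rcases Nat.eq_zero_or_pos t with h0 | h
    · exfalso
      apply hne
      have hsub : S ⊆ univ.image (fun i : Fin m => Fin.natAdd n i) := by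
        intro z hz
        have hzn : ¬ ((z : ℕ) < n) := by
          intro hzn
          have : z ∈ Slow := by rw [hSlow, Finset.mem_filter]; exact ⟨hz, hzn⟩
          rw [hSlow] at this
          have : 0 < Slow.card := Finset.card_pos.2 ⟨z, by rw [hSlow]; exact Finset.mem_filter.2 ⟨hz, hzn⟩⟩
          omega
        simp only [Finset.mem_image, mem_univ, true_and]
        refine ⟨⟨(z : ℕ) - n, by have := z.isLt; omega⟩, Fin.ext ?_⟩
        simp only [Fin.coe_natAdd]
        omega
      apply Finset.eq_of_subset_of_card_le hsub
      rw [hcard, Finset.card_image_of_injective, card_univ, Fintype.card_fin]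
      intro a b hab
      have := congrArg Fin.val hab
      simp only [Fin.coe_natAdd] at this
      exact Fin.ext (by omega)
    · exact h
  -- high part
  have hhigh : Shigh = (univ.filter fun i : Fin m => Fin.natAdd n i ∈ S).image
      (fun i : Fin m => Fin.natAdd n i) := by
    ext z
    simp only [hShigh, Finset.mem_filter, Finset.mem_image, mem_univ, true_and]
    constructor
    · rintro ⟨hz, hzn⟩
      have he : Fin.natAdd n (⟨(z : ℕ) - n, by have := z.isLt; omega⟩ : Fin m) = z :=
        Fin.ext (by simp only [Fin.coe_natAdd]; omega)
      exact ⟨⟨(z : ℕ) - n, by have := z.isLt; omega⟩, by rw [he]; exact hz, he⟩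
    · rintro ⟨i, hi, rfl⟩
      exact ⟨hi, by simp⟩
  have hinjB : Function.Injective (fun i : Fin m => Fin.natAdd n i) := by
    intro a b hab
    have := congrArg Fin.val hab
    simp only [Fin.coe_natAdd] at this
    exact Fin.ext (by omega)
  have hcardhigh : (univ.filter fun i : Fin m => Fin.natAdd n i ∈ S).card = m - t := by
    have := hhigh ▸ Finset.card_image_of_injective
      (univ.filter fun i : Fin m => Fin.natAdd n i ∈ S) hinjB
    omega
  have hcardrev : (univ.filter fun i : Fin m => Fin.natAdd n (Fin.rev i) ∈ S).card = m - t := by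
    rw [← hcardhigh]
    apply Finset.card_bij' (fun i _ => Fin.rev i) (fun i _ => Fin.rev i)
    · intro i hi
      simp only [Finset.mem_filter, mem_univ, true_and] at *
      exact hi
    · intro i hi
      simp only [Finset.mem_filter, mem_univ, true_and] at *
      rwa [Fin.rev_rev]
    · intro i _; exact Fin.rev_rev i
    · intro i _; exact Fin.rev_rev i
  set SI : Finset (Fin m) :=
    univ.filter (fun i : Fin m => ¬ (Fin.natAdd n (Fin.rev i) ∈ S)) with hSI
  have hcardSI : SI.card = t := by
    have := Finset.card_filter_add_card_filter_not
      (s := (univ : Finset (Fin m))) (p := fun i : Fin m => Fin.natAdd n (Fin.rev i) ∈ S)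
    rw [card_univ, Fintype.card_fin] at this
    rw [hSI]
    omega
  refine ⟨⟨t, ht1, htm, SI.orderEmbOfFin hcardSI, SJ.orderEmbOfFin rfl⟩, ?_⟩
  have himgI : univ.image (SI.orderEmbOfFin hcardSI) = SI := image_orderEmbOfFin _ _
  have himgJ : univ.image (SJ.orderEmbOfFin rfl) = SJ := image_orderEmbOfFin _ _
  ext x
  simp only [deltaImage, Finset.mem_sdiff, Finset.mem_union, Finset.mem_image, mem_univ,
    true_and]
  rcases Nat.lt_or_ge (x : ℕ) n with hxn | hxn
  · -- low case
    constructor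
    · rintro ⟨hA | hB, -⟩
      · obtain ⟨s, rfl⟩ := hA
        have hmem : SJ.orderEmbOfFin rfl s ∈ SJ := Finset.orderEmbOfFin_mem _ _ _
        exact (Finset.mem_filter.1 hmem).2
      · obtain ⟨i, rfl⟩ := hB
        simp only [Fin.coe_natAdd] at hxn
        omega
    · intro hx
      refine ⟨Or.inl ?_, ?_⟩
      · have hj : (⟨(x : ℕ), hxn⟩ : Fin n) ∈ SJ := by
          refine Finset.mem_filter.2 ⟨mem_univ _, ?_⟩
          have he : Fin.castLE (Nat.le_add_right n m) (⟨(x : ℕ), hxn⟩ : Fin n) = x :=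
            Fin.ext rfl
          rwa [he]
        have : ∃ s, SJ.orderEmbOfFin rfl s = ⟨(x : ℕ), hxn⟩ := by
          have := himgJ ▸ hj
          simpa only [Finset.mem_image, mem_univ, true_and] using this
        obtain ⟨s, hs⟩ := this
        exact ⟨s, by rw [hs]; exact Fin.ext rfl⟩
      · rintro ⟨s, hs⟩
        have := congrArg Fin.val hs
        simp only [Fin.coe_natAdd] at this
        omega
  · -- high case
    set i : Fin m := ⟨(x : ℕ) - n, by have := x.isLt; omega⟩ with hi
    have hxi : Fin.natAdd n i = x := Fin.ext (by simp only [Fin.coe_natAdd, hi]; omega)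
    constructor
    · rintro ⟨-, hC⟩
      by_contra hxS
      apply hC
      have hrev : Fin.rev i ∈ SI := by
        refine Finset.mem_filter.2 ⟨mem_univ _, ?_⟩
        rw [Fin.rev_rev, hxi]
        exact hxS
      have : ∃ s, SI.orderEmbOfFin hcardSI s = Fin.rev i := by
        have := himgI ▸ hrev
        simpa only [Finset.mem_image, mem_univ, true_and] using this
      obtain ⟨s, hs⟩ := this
      exact ⟨s, by rw [hs, Fin.rev_rev, hxi]⟩
    · intro hx
      constructor
      · exact Or.inr ⟨i, hxi⟩
      · rintro ⟨s, hs⟩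
        have hmem : SI.orderEmbOfFin hcardSI s ∈ SI := Finset.orderEmbOfFin_mem _ _ _
        apply (Finset.mem_filter.1 hmem).2
        rw [hs]
        exact hx
end DeltaIdx


namespace DeltaIdx

lemma le_iff_cnt {m n : ℕ} (hm : 0 < m) (P Q : DeltaIdx m n) :
    P ≤ Q ↔ ∀ x : Fin (n + m),
      ((deltaImage Q).filter fun z => z < x).card
        ≤ ((deltaImage P).filter fun z => z < x).card := by
  constructor
  · rintro ⟨h, hI, hJ⟩ x
    rcases Nat.lt_or_ge (x : ℕ) n with hxn | hxn
    · rw [P.cnt_low x (le_of_lt hxn), Q.cnt_low x (le_of_lt hxn)]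
      apply card_le_card_of_injOn (fun s => Fin.castLE h s)
      · intro s hs
        simp only [mem_coe, mem_filter, mem_univ, true_and] at *
        have h2 := hJ s
        rw [Fin.le_def] at h2
        omega
      · exact fun a _ b _ hab => Fin.castLE_injective h hab
    · rw [P.cnt_high x hxn, Q.cnt_high x hxn]
      apply Nat.add_le_add_left
      apply card_le_card_of_injOn (fun s => Fin.castLE h s)
      · intro s hs
        simp only [mem_coe, mem_filter, mem_univ, true_and] at *
        have h2 := hI s
        rw [Fin.le_def] at h2
        omega
      · exact fun a _ b _ hab => Fin.castLE_injective h hab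
  · intro hc
    have hn : (n : ℕ) < n + m := by omega
    have h1 := hc ⟨n, hn⟩
    rw [P.cnt_low _ (le_refl n), Q.cnt_low _ (le_refl n)] at h1
    have hful : ∀ (u' : ℕ) (f : Fin u' ↪o Fin n),
        (univ.filter fun s : Fin u' => ((f s : ℕ) < n)).card = u' := by
      intro u' f
      rw [Finset.filter_true_of_mem (fun s _ => (f s).isLt), card_univ, Fintype.card_fin]
    rw [hful _ P.J, hful _ Q.J] at h1
    refine ⟨h1, fun s => ?_, fun s => ?_⟩
    · -- I component
      have hcm : (Q.I s : ℕ) < m := (Q.I s).isLt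
      set y : ℕ := m - 1 - (Q.I s : ℕ) with hydef
      have hx2 : n + y < n + m := by omega
      have h2 := hc ⟨n + y, hx2⟩
      rw [P.cnt_high _ (by simp), Q.cnt_high _ (by simp)] at h2
      have hmy : m - ((((⟨n + y, hx2⟩ : Fin (n + m)) : ℕ)) - n) = (Q.I s : ℕ) + 1 := by
        simp only []
        omega
      rw [hmy] at h2
      have hcount : (univ.filter fun s' : Fin Q.t => ((Q.I s' : ℕ) < (Q.I s : ℕ) + 1)).card
          ≤ (univ.filter fun s' : Fin P.t => ((P.I s' : ℕ) < (Q.I s : ℕ) + 1)).card := by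
        omega
      rw [cnt_val_succ Q.I (Q.I s), cnt_val_succ P.I (Q.I s),
        card_filter_emb_le Q.I s] at hcount
      refine emb_le_of_card_le P.I (Fin.castLE h1 s) (Q.I s) ?_
      have : ((Fin.castLE h1 s : Fin P.t) : ℕ) = (s : ℕ) := rfl
      omega
    · -- J component
      by_contra hlt
      push_neg at hlt
      have hcn : ((P.J (Fin.castLE h1 s) : Fin n) : ℕ) < n := (P.J _).isLt
      have h3 := hc ⟨((P.J (Fin.castLE h1 s) : Fin n) : ℕ), by omega⟩
      rw [P.cnt_low _ (le_of_lt hcn), Q.cnt_low _ (le_of_lt hcn)] at h3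
      have h3' : (univ.filter fun s' : Fin Q.t =>
            ((Q.J s' : ℕ) < ((P.J (Fin.castLE h1 s) : Fin n) : ℕ))).card
          ≤ (univ.filter fun s' : Fin P.t =>
            ((P.J s' : ℕ) < ((P.J (Fin.castLE h1 s) : Fin n) : ℕ))).card := h3
      have hR : (univ.filter fun s' : Fin P.t =>
          ((P.J s' : ℕ) < ((P.J (Fin.castLE h1 s) : Fin n) : ℕ))).card = (s : ℕ) := by
        have := cnt_val_emb_lt P.J (Fin.castLE h1 s)
        simpa using this
      have hL : (s : ℕ) + 1 ≤ (univ.filter fun s' : Fin Q.t =>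
          ((Q.J s' : ℕ) < ((P.J (Fin.castLE h1 s) : Fin n) : ℕ))).card := by
        have hsub : Finset.Iic s ⊆ univ.filter fun s' : Fin Q.t =>
            ((Q.J s' : ℕ) < ((P.J (Fin.castLE h1 s) : Fin n) : ℕ)) := by
          intro s' hs'
          simp only [Finset.mem_Iic] at hs'
          simp only [mem_filter, mem_univ, true_and]
          have hq : Q.J s' ≤ Q.J s := Q.J.monotone hs'
          rw [Fin.le_def] at hq
          rw [Fin.lt_def] at hlt
          omega
        have := card_le_card hsub
        rw [Fin.card_Iic] at this
        omega
      omega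

end DeltaIdx

end Helpers

/-- The map `δ_{m,n} : Δ_{m,n} → Π_{m,n+m} ∖ {{n+1,…,n+m}}`,
`(I,J) ↦ K_{(I,J)}`, is well defined (each `K_{(I,J)}` is an `m`-element subset different from
`{n+1,…,n+m}`), it is bijective onto `Π_{m,n+m} ∖ {{n+1,…,n+m}}`, and it is an isomorphism of
posets: `(I,J) ≤st (K,L)` iff `δ_{m,n}(I,J) ≤st δ_{m,n}(K,L)`, where the standard order on
`m`-element subsets is comparison of the increasing enumerations. -/
theorem deltaImage_poset_isomorphism (m n : ℕ) (hm : 0 < m) (hmn : m ≤ n) :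
    (∀ P : DeltaIdx m n,
        (deltaImage P).card = m ∧
        deltaImage P ≠ Finset.univ.image (fun i : Fin m => Fin.natAdd n i)) ∧
    Function.Injective (deltaImage (m := m) (n := n)) ∧
    (∀ S : Finset (Fin (n + m)), S.card = m →
        S ≠ Finset.univ.image (fun i : Fin m => Fin.natAdd n i) →
        ∃ P : DeltaIdx m n, deltaImage P = S) ∧
    (∀ P Q : DeltaIdx m n, P ≤ Q ↔
        List.Forall₂ (· ≤ ·)
          ((deltaImage P).sort (· ≤ ·)) ((deltaImage Q).sort (· ≤ ·))) := by
  refine ⟨fun P => ⟨P.card_deltaImage, P.deltaImage_ne⟩, ?_, ?_, ?_⟩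
  · intro P Q h
    have h1 : P ≤ Q := (DeltaIdx.le_iff_cnt hm P Q).2 (fun x => by rw [h])
    have h2 : Q ≤ P := (DeltaIdx.le_iff_cnt hm Q P).2 (fun x => by rw [h])
    exact le_antisymm h1 h2
  · exact fun S hS hne => DeltaIdx.surj hm S hS hne
  · intro P Q
    rw [DeltaIdx.le_iff_cnt hm P Q,
      forall₂_sort_iff (deltaImage P) (deltaImage Q) P.card_deltaImage Q.card_deltaImage]
end
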